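/- arXiv:1104.1408 — 5 statements merged into one kernel-verified Lean document; each statement's English description precedes it below -/
import Mathlib

section
/- Let v, u, g be natural numbers with v = u + g, g ≥ 1 and u ≥ 2. If w : Fin v → ZMod 2 is an end-around phased-burst error pattern of burst length u with error-free gap g, then the Hamming weight of w (the number of positions i with w i = 1) is at least ⌈(u−1)/g⌉ + 1. -/
/-- The Hamming weight of a binary word: the number of positions where it equals 1. -/
def wt {α : Type*} [Fintype α] (f : α → ZMod 2) : ℕ :=
  (Finset.univ.filter fun i => f i = 1).card

/-- Cyclic index: the position `(s + j) mod v` in `Fin v`. -/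
def cycIdx {v : ℕ} (s : Fin v) (j : ℕ) : Fin v :=
  ⟨(s.val + j) % v, Nat.mod_lt _ s.pos⟩

/-- `w : Fin v → ZMod 2` is an end-around phased-burst error of burst length `u`
with error-free gap `g = v - u` (where `1 ≤ g` and `2 ≤ u`): there is a position `s`
such that the gap `s, s+1, …, s+g-1` (cyclically) is identically zero, the burst of
length `u` occupying the complementary cyclic interval is bounded at both ends by ones
(`w (s-1) = 1` and `w (s+g) = 1`), and every run of consecutive (cyclic) zeros contained
in that complementary interval has length strictly less than `g`. -/
def IsEndAroundBurst (v u : ℕ) (w : Fin v → ZMod 2) : Prop :=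
  2 ≤ u ∧ u + 1 ≤ v ∧
  ∃ s : Fin v,
    (∀ j, j < v - u → w (cycIdx s j) = 0) ∧
    w (cycIdx s (v - 1)) = 1 ∧
    w (cycIdx s (v - u)) = 1 ∧
    (∀ a L, a + L ≤ u → (∀ j, j < L → w (cycIdx s (v - u + a + j)) = 0) → L < v - u)

/-- The set of ones among the first `m+1` positions of the burst. -/
def burstOnes {v : ℕ} (w : Fin v → ZMod 2) (s : Fin v) (u m : ℕ) : Finset (Fin v) :=
  ((Finset.range (m+1)).image (fun a => cycIdx s (v - u + a))).filter (fun i => w i = 1)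

/-- If `w : Fin v → ZMod 2` with `v = u + g`, `g ≥ 1`, `u ≥ 2` is an end-around
phased-burst error pattern of burst length `u` with error-free gap `g`, then the
Hamming weight of `w` is at least `⌈(u-1)/g⌉ + 1`. -/
theorem stmt0 (v u g : ℕ) (hv : v = u + g) (hg : 1 ≤ g) (hu : 2 ≤ u)
    (w : Fin v → ZMod 2) (hw : IsEndAroundBurst v u w) :
    ⌈((u : ℚ) - 1) / (g : ℚ)⌉ + 1 ≤ (wt w : ℤ) := by
  obtain ⟨hu2, huv, s, hgap, hend, hstart, hrun⟩ := hw
  have hgv : v - u = g := by omega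
  have hg0 : 0 < g := hg
  -- injectivity of burst positions
  have hinj : ∀ a b : ℕ, a < u → b < u →
      cycIdx s (v - u + a) = cycIdx s (v - u + b) → a = b := by
    intro a b ha hb h
    have h' : (s.val + (v - u + a)) % v = (s.val + (v - u + b)) % v := congrArg Fin.val h
    have hmq : (v - u + a) % v = (v - u + b) % v :=
      Nat.ModEq.add_left_cancel' s.val h'
    rw [Nat.mod_eq_of_lt (by omega), Nat.mod_eq_of_lt (by omega)] at hmq
    omega
  -- key induction
  have key : ∀ m, m ≤ u - 1 → w (cycIdx s (v - u + m)) = 1 →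
      (m + g - 1) / g + 1 ≤ (burstOnes w s u m).card := by
    intro m
    induction m using Nat.strong_induction_on with
    | _ m IH =>
      intro hm hone
      have hmem : ∀ m', m' ≤ m → w (cycIdx s (v - u + m')) = 1 →
          cycIdx s (v - u + m') ∈ burstOnes w s u m := by
        intro m' hm' h1
        simp only [burstOnes, Finset.mem_filter, Finset.mem_image, Finset.mem_range]
        exact ⟨⟨m', by omega, rfl⟩, h1⟩
      rcases lt_or_ge m g with hlt | hge
      · -- m < g
        rcases Nat.eq_zero_or_pos m with h0 | h0
        · subst h0
          have : (0 + g - 1) / g = 0 := Nat.div_eq_of_lt (by omega)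
          rw [this]
          have : cycIdx s (v - u + 0) ∈ burstOnes w s u 0 := hmem 0 le_rfl hone
          have := Finset.card_pos.mpr ⟨_, this⟩
          omega
        · -- two ones: at 0 and at m
          have hd : (m + g - 1) / g < 2 := by
            rw [Nat.div_lt_iff_lt_mul hg0]; omega
          have hx : cycIdx s (v - u + 0) ∈ burstOnes w s u m := by
            apply hmem 0 (by omega)
            simpa using hstart
          have hy : cycIdx s (v - u + m) ∈ burstOnes w s u m := hmem m le_rfl hone
          have hne : cycIdx s (v - u + 0) ≠ cycIdx s (v - u + m) := by
            intro h
            have := hinj 0 m (by omega) (by omega) h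
            omega
          have hsub : ({cycIdx s (v - u + 0), cycIdx s (v - u + m)} : Finset (Fin v))
              ⊆ burstOnes w s u m := by
            intro x hx'
            simp only [Finset.mem_insert, Finset.mem_singleton] at hx'
            rcases hx' with h | h <;> subst h <;> assumption
          have hcard : ({cycIdx s (v - u + 0), cycIdx s (v - u + m)} : Finset (Fin v)).card = 2 :=
            Finset.card_pair hne
          have := Finset.card_le_card hsub
          omega
      · -- m ≥ g : find a one in the window [m-g, m-1]
        have hex : ∃ m', m - g ≤ m' ∧ m' < m ∧ w (cycIdx s (v - u + m')) = 1 := by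
          by_contra hc
          push_neg at hc
          have hz : ∀ j, j < g → w (cycIdx s (v - u + (m - g) + j)) = 0 := by
            intro j hj
            have heq : v - u + (m - g) + j = v - u + (m - g + j) := by omega
            rw [heq]
            have h1 := hc (m - g + j) (by omega) (by omega)
            have : w (cycIdx s (v - u + (m - g + j))) = 0 ∨
                w (cycIdx s (v - u + (m - g + j))) = 1 := by
              generalize w (cycIdx s (v - u + (m - g + j))) = x
              revert x; decide
            tauto
          have := hrun (m - g) g (by omega) hz
          omega
        obtain ⟨m', hm'1, hm'2, hm'3⟩ := hex
        have hIH := IH m' hm'2 (by omega) hm'3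
        -- burstOnes m' ∪ {new} ⊆ burstOnes m
        have hsub : burstOnes w s u m' ⊆ burstOnes w s u m := by
          apply Finset.filter_subset_filter
          apply Finset.image_subset_image
          exact Finset.range_subset_range.mpr (by omega)
        have hnot : cycIdx s (v - u + m) ∉ burstOnes w s u m' := by
          intro h
          simp only [burstOnes, Finset.mem_filter, Finset.mem_image, Finset.mem_range] at h
          obtain ⟨⟨a, ha, haeq⟩, _⟩ := h
          have := hinj a m (by omega) (by omega) haeq
          omega
        have hsub2 : insert (cycIdx s (v - u + m)) (burstOnes w s u m') ⊆ burstOnes w s u m := by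
          intro x hx'
          rcases Finset.mem_insert.mp hx' with h | h
          · subst h; exact hmem m le_rfl hone
          · exact hsub h
        have hcard : (insert (cycIdx s (v - u + m)) (burstOnes w s u m')).card
            = (burstOnes w s u m').card + 1 := Finset.card_insert_of_notMem hnot
        have hle := Finset.card_le_card hsub2
        -- div arithmetic: (m+g-1)/g ≤ (m'+g-1)/g + 1
        have hdiv : (m + g - 1) / g ≤ (m' + g - 1) / g + 1 := by
          have h1 : (m' + g - 1 + g) / g = (m' + g - 1) / g + 1 := Nat.add_div_right _ hg0
          calc (m + g - 1) / g ≤ (m' + g - 1 + g) / g :=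
                Nat.div_le_div_right (by omega)
            _ = (m' + g - 1) / g + 1 := h1
        omega
  -- apply key at m = u - 1
  have hone : w (cycIdx s (v - u + (u - 1))) = 1 := by
    have : v - u + (u - 1) = v - 1 := by omega
    rw [this]; exact hend
  have hkey := key (u - 1) le_rfl hone
  -- burstOnes ⊆ weight set
  have hwt : (burstOnes w s u (u - 1)).card ≤ wt w := by
    apply Finset.card_le_card
    intro x hx
    simp only [burstOnes, Finset.mem_filter] at hx
    simp only [wt, Finset.mem_filter, Finset.mem_univ, true_and]
    exact hx.2
  set K : ℕ := (u - 1 + g - 1) / g with hK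
  have hKg : u - 1 ≤ K * g := by
    have h1 : g * K + (u - 1 + g - 1) % g = u - 1 + g - 1 := Nat.div_add_mod _ _
    have h2 : (u - 1 + g - 1) % g < g := Nat.mod_lt _ hg0
    rw [mul_comm]
    set x := g * K
    omega
  have hceil : ⌈((u : ℚ) - 1) / (g : ℚ)⌉ ≤ (K : ℤ) := by
    rw [Int.ceil_le]
    rw [div_le_iff₀ (by exact_mod_cast hg0)]
    have : ((u - 1 : ℕ) : ℚ) ≤ ((K * g : ℕ) : ℚ) := Nat.cast_le.mpr hKg
    push_cast [Nat.cast_sub (by omega : 1 ≤ u)] at this ⊢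
    linarith
  have : (K : ℤ) + 1 ≤ (wt w : ℤ) := by
    have : K + 1 ≤ wt w := le_trans hkey hwt
    exact_mod_cast this
  omega
end

section
/- For natural numbers c, d, e, the number of binary words f : Fin c → ZMod 2 of Hamming weight exactly d that contain no run of e+1 consecutive zeros (i.e., for every index i with i + e < c there exists 0 ≤ j ≤ e with f(i+j) = 1) is equal, as an integer, to Σ_{j ∈ J} (−1)^j · C(d+1, j) · C(c − j(e+1), d), where J = { j : 0 ≤ j ≤ d+1 and c − j(e+1) ≥ 0 } and C(·,·) denotes the binomial coefficient. -/
open Finset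

/-- `f : Fin c → ZMod 2` contains no run of `e + 1` consecutive zeros:
for every index `i` with `i + e < c` there exists `0 ≤ j ≤ e` with `f (i + j) = 1`. -/
def NoZeroRun (c e : ℕ) (f : Fin c → ZMod 2) : Prop :=
  ∀ i : ℕ, ∀ _h : i + e < c, ∃ j : Fin (e + 1),
    f ⟨i + j.val, by have := j.isLt; omega⟩ = 1


/-- number of k-tuples of naturals summing to n with all entries ≤ b -/
def Cb (e k n : ℕ) : ℕ :=
  ((Finset.Nat.antidiagonalTuple k n).filter (fun g => ∀ i, g i ≤ e)).card

lemma Cb_succ (b k n : ℕ) :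
    Cb b (k+1) n = ∑ t ∈ range (min (b+1) (n+1)), Cb b k (n - t) := by
  rw [Cb, Finset.card_eq_sum_card_fiberwise (f := fun g => g 0)
    (t := range (min (b+1) (n+1))) ?_]
  · refine Finset.sum_congr rfl fun t ht => ?_
    rw [mem_range, lt_min_iff, Nat.lt_succ_iff, Nat.lt_succ_iff] at ht
    refine Finset.card_bij' (fun g _ => Fin.tail g) (fun h _ => Fin.cons t h) ?_ ?_ ?_ ?_
    · rintro g hg
      simp only [mem_filter, Finset.Nat.mem_antidiagonalTuple, Fin.sum_univ_succ] at hg ⊢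
      obtain ⟨⟨hsum, hb⟩, h0⟩ := hg
      refine ⟨?_, fun i => hb i.succ⟩
      simp only [Fin.tail]
      omega
    · rintro h hh
      simp only [mem_filter, Finset.Nat.mem_antidiagonalTuple, Fin.sum_univ_succ,
        Fin.cons_zero, Fin.cons_succ] at hh ⊢
      refine ⟨⟨by omega, fun i => ?_⟩, trivial⟩
      cases i using Fin.cases with
      | zero => simpa using ht.1
      | succ i => simpa using hh.2 i
    · rintro g hg
      simp only [mem_filter] at hg
      funext i
      cases i using Fin.cases with
      | zero => simpa using hg.2.symm
      | succ i => simp [Fin.tail]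
    · rintro h _
      funext i
      simp [Fin.tail]
  · intro g hg
    simp only [Finset.mem_coe, mem_filter, Finset.Nat.mem_antidiagonalTuple, Fin.sum_univ_succ] at hg
    rw [Finset.mem_coe, mem_range, lt_min_iff, Nat.lt_succ_iff, Nat.lt_succ_iff]
    exact ⟨hg.2 0, Nat.le.intro hg.1⟩

lemma adt_card_eq_Cb (k n : ℕ) : (Finset.Nat.antidiagonalTuple k n).card = Cb n k n := by
  rw [Cb, Finset.filter_true_of_mem]
  intro g hg i
  rw [Finset.Nat.mem_antidiagonalTuple] at hg
  calc g i ≤ ∑ j, g j := Finset.single_le_sum (fun _ _ => Nat.zero_le _) (mem_univ i)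
  _ = n := hg

lemma adt_card : ∀ (k n : ℕ), (Finset.Nat.antidiagonalTuple (k+1) n).card = (n+k).choose k := by
  intro k
  induction k with
  | zero => intro n; simp
  | succ k ih =>
    intro n
    have step : ∀ m, m ≤ n → (Finset.Nat.antidiagonalTuple (k+1) m).card = Cb n (k+1) m := by
      intro m hm
      rw [Cb, Finset.filter_true_of_mem]
      intro g hg i
      rw [Finset.Nat.mem_antidiagonalTuple] at hg
      calc g i ≤ ∑ j, g j := Finset.single_le_sum (fun _ _ => Nat.zero_le _) (mem_univ i)
      _ = m := hg
      _ ≤ n := hm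
    rw [adt_card_eq_Cb, Cb_succ, min_self]
    have : ∀ t ∈ range (n+1), Cb n (k+1) (n-t) = (n-t+k).choose k := by
      intro t ht
      rw [← step _ (Nat.sub_le _ _), ih]
    have hs : ∑ x ∈ range (n+1), (n - x + k).choose k
        = ∑ j ∈ range (n+1), (j+k).choose k := by
      rw [← Finset.sum_range_reflect]
      refine Finset.sum_congr rfl fun j hj => ?_
      rw [mem_range] at hj
      congr 2
      omega
    rw [Finset.sum_congr rfl this, hs, Nat.sum_range_add_choose,
      show n + (k+1) = n + k + 1 from by omega]



lemma chi_sum (e K : ℕ) (S : Finset (Fin K)) :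
    ∑ i : Fin K, (if i ∈ S then e + 1 else 0) = S.card * (e + 1) := by
  rw [Finset.sum_ite_mem, univ_inter, Finset.sum_const, smul_eq_mul]

lemma shift_card (e K m : ℕ) (S : Finset (Fin K)) :
    ((Finset.Nat.antidiagonalTuple K m).filter (fun g => ∀ i ∈ S, e + 1 ≤ g i)).card
      = if S.card * (e+1) ≤ m then
          (Finset.Nat.antidiagonalTuple K (m - S.card * (e+1))).card
        else 0 := by
  by_cases hle : S.card * (e+1) ≤ m
  · rw [if_pos hle]
    refine Finset.card_bij' (fun g _ => fun i => g i - (if i ∈ S then e+1 else 0))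
      (fun h _ => fun i => h i + (if i ∈ S then e+1 else 0)) ?_ ?_ ?_ ?_
    · intro g hg
      simp only [mem_filter, Finset.Nat.mem_antidiagonalTuple] at hg ⊢
      obtain ⟨hsum, hall⟩ := hg
      have key : ∀ i : Fin K, (g i - (if i ∈ S then e+1 else 0)) + (if i ∈ S then e+1 else 0)
          = g i := by
        intro i
        by_cases hi : i ∈ S
        · simp only [if_pos hi]
          exact Nat.sub_add_cancel (hall i hi)
        · simp [hi]
      have h2 : (∑ i, (g i - (if i ∈ S then e+1 else 0))) + S.card * (e+1) = m := by
        rw [← chi_sum e K S, ← Finset.sum_add_distrib]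
        rw [Finset.sum_congr rfl fun i _ => key i]
        exact hsum
      omega
    · intro h hh
      simp only [mem_filter, Finset.Nat.mem_antidiagonalTuple] at hh ⊢
      constructor
      · rw [Finset.sum_add_distrib, hh, chi_sum]
        omega
      · intro i hi
        simp [if_pos hi]
    · intro g hg
      simp only [mem_filter] at hg
      funext i
      by_cases hi : i ∈ S
      · simp only [if_pos hi]
        exact Nat.sub_add_cancel (hg.2 i hi)
      · simp [hi]
    · intro h _
      funext i
      by_cases hi : i ∈ S <;> simp [hi]
  · rw [if_neg hle, Finset.card_eq_zero, Finset.filter_eq_empty_iff]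
    intro g hg hall
    rw [Finset.Nat.mem_antidiagonalTuple] at hg
    have h1 : S.card * (e+1) = ∑ i ∈ S, (e+1) := by rw [Finset.sum_const, smul_eq_mul]
    have h2 : ∑ i ∈ S, (e+1) ≤ ∑ i ∈ S, g i := Finset.sum_le_sum fun i hi => hall i hi
    have h3 : ∑ i ∈ S, g i ≤ ∑ i, g i :=
      Finset.sum_le_sum_of_subset (Finset.subset_univ S)
    omega

lemma Cb_eq_sum (e K n : ℕ) :
    (Cb e K n : ℤ) = ∑ j ∈ range (K+1),
      (-1 : ℤ)^j * (K.choose j : ℤ) *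
        (if j*(e+1) ≤ n then ((Finset.Nat.antidiagonalTuple K (n - j*(e+1))).card : ℤ)
         else 0) := by
  have step1 : (Cb e K n : ℤ) = ∑ g ∈ Finset.Nat.antidiagonalTuple K n,
      (if ∀ i, g i ≤ e then (1 : ℤ) else 0) := by
    rw [Cb, Finset.card_filter]
    push_cast
    rfl
  have perg : ∀ g : Fin K → ℕ,
      (if ∀ i, g i ≤ e then (1 : ℤ) else 0)
        = ∑ S ∈ (univ : Finset (Fin K)).powerset,
            (-1 : ℤ)^S.card * (if ∀ i ∈ S, e+1 ≤ g i then 1 else 0) := by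
    intro g
    set T : Finset (Fin K) := univ.filter (fun i => e+1 ≤ g i) with hT
    have hiff : ∀ S : Finset (Fin K), (∀ i ∈ S, e+1 ≤ g i) ↔ S ⊆ T := by
      intro S
      constructor
      · intro h i hi
        rw [hT, mem_filter]
        exact ⟨mem_univ i, h i hi⟩
      · intro h i hi
        have := h hi
        rw [hT, mem_filter] at this
        exact this.2
    have : ∑ S ∈ (univ : Finset (Fin K)).powerset,
        (-1 : ℤ)^S.card * (if ∀ i ∈ S, e+1 ≤ g i then 1 else 0)
        = ∑ S ∈ T.powerset, (-1 : ℤ)^S.card := by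
      simp_rw [mul_ite, mul_one, mul_zero]
      rw [← Finset.sum_filter]
      · apply Finset.sum_congr
        · ext S
          simp only [mem_filter, mem_powerset, subset_univ, true_and, hiff]
        · intros; rfl
    rw [this, Finset.sum_powerset_neg_one_pow_card]
    congr 1
    rw [eq_iff_iff, Finset.filter_eq_empty_iff]
    simp only [mem_univ, true_implies, not_le, Nat.lt_succ_iff]
  rw [step1, Finset.sum_congr rfl fun g _ => perg g, Finset.sum_comm]
  have inner : ∀ S : Finset (Fin K),
      ∑ g ∈ Finset.Nat.antidiagonalTuple K n,
        (-1 : ℤ)^S.card * (if ∀ i ∈ S, e+1 ≤ g i then 1 else 0)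
      = (-1 : ℤ)^S.card *
        (if S.card*(e+1) ≤ n then
          ((Finset.Nat.antidiagonalTuple K (n - S.card*(e+1))).card : ℤ) else 0) := by
    intro S
    rw [← Finset.mul_sum]
    congr 1
    rw [← Finset.sum_filter, Finset.sum_const, nsmul_eq_mul, mul_one,
      shift_card e K n S]
    split_ifs <;> simp
  rw [Finset.sum_congr rfl fun S _ => inner S]
  rw [Finset.sum_powerset_apply_card
    (fun j => (-1 : ℤ)^j * (if j*(e+1) ≤ n then
      ((Finset.Nat.antidiagonalTuple K (n - j*(e+1))).card : ℤ) else 0))]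
  rw [card_univ, Fintype.card_fin]
  apply Finset.sum_congr rfl
  intro j _
  rw [nsmul_eq_mul]
  ring



lemma zmod2_cases (x : ZMod 2) : x = 0 ∨ x = 1 := by
  fin_cases x
  · left; rfl
  · right; rfl

lemma zmod2_ne (h : (0 : ZMod 2) = 1) : False := by simp at h

instance NoZeroRun.dec (c e : ℕ) (f : Fin c → ZMod 2) : Decidable (NoZeroRun c e f) :=
  decidable_of_iff (∀ i < c, ∀ h : i + e < c, ∃ j : Fin (e + 1),
      f ⟨i + j.val, by have := j.isLt; omega⟩ = 1) (by
    constructor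
    · intro h i hi
      exact h i (by omega) hi
    · intro h i _ hi
      exact h i hi)

/-- the count of words -/
def Wf (c d e : ℕ) : ℕ :=
  (Finset.univ.filter fun f : Fin c → ZMod 2 => wt f = d ∧ NoZeroRun c e f).card

lemma fcong {c : ℕ} {β : Sort*} (f : Fin c → β) {a b : ℕ} (ha : a < c) (hb : b < c)
    (h : a = b) : f ⟨a, ha⟩ = f ⟨b, hb⟩ := by subst h; rfl

lemma wt_le (c : ℕ) (f : Fin c → ZMod 2) : wt f ≤ c := by
  calc wt f ≤ (univ : Finset (Fin c)).card := Finset.card_filter_le _ _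
  _ = c := by simp

lemma wt_eq_zero_iff (c : ℕ) (f : Fin c → ZMod 2) : wt f = 0 ↔ ∀ p, f p = 0 := by
  rw [wt, Finset.card_eq_zero, Finset.filter_eq_empty_iff]
  constructor
  · intro h p
    rcases zmod2_cases (f p) with h0 | h1
    · exact h0
    · exact absurd h1 (h (mem_univ p))
  · intro h p _
    rw [h p]
    exact fun hc => zmod2_ne hc

lemma Wf_zero (c e : ℕ) : Wf c 0 e = if c ≤ e then 1 else 0 := by
  rw [Wf]
  split_ifs with hce
  · rw [Finset.card_eq_one]
    refine ⟨fun _ => 0, ?_⟩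
    ext f
    simp only [mem_filter, mem_univ, true_and, mem_singleton]
    constructor
    · rintro ⟨hw, -⟩
      funext p
      exact (wt_eq_zero_iff c f).mp hw p
    · rintro rfl
      refine ⟨(wt_eq_zero_iff c _).mpr fun _ => rfl, ?_⟩
      intro i hi
      omega
  · rw [Finset.card_eq_zero, Finset.filter_eq_empty_iff]
    rintro f - ⟨hw, hnr⟩
    obtain ⟨j, hj⟩ := hnr 0 (by omega)
    rw [(wt_eq_zero_iff c f).mp hw] at hj
    exact zmod2_ne hj

lemma Wf_eq_zero_of_lt (c d e : ℕ) (h : c < d) : Wf c d e = 0 := by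
  rw [Wf, Finset.card_eq_zero, Finset.filter_eq_empty_iff]
  rintro f - ⟨hw, -⟩
  have := wt_le c f
  omega

/-- the tail of a word after position t -/
def tailw (c t : ℕ) (f : Fin c → ZMod 2) (p : Fin (c - 1 - t)) : ZMod 2 :=
  f ⟨p.val + t + 1, by have := p.isLt; omega⟩

/-- extend a word by 0^t 1 in front -/
def extw (c t : ℕ) (f' : Fin (c - 1 - t) → ZMod 2) (p : Fin c) : ZMod 2 :=
  if h : t < p.val then f' ⟨p.val - t - 1, by have := p.isLt; omega⟩
  else if p.val = t then 1 else 0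

lemma tailw_extw (c t : ℕ) (f' : Fin (c - 1 - t) → ZMod 2) :
    tailw c t (extw c t f') = f' := by
  funext p
  have hp := p.isLt
  rw [tailw, extw, dif_pos (by omega : t < p.val + t + 1)]
  congr 1
  ext
  simp
  omega

lemma wt_succ_of (c t : ℕ) (f : Fin c → ZMod 2) (ht : t < c) (h1 : f ⟨t, ht⟩ = 1)
    (h0 : ∀ q (hq : q < c), q < t → f ⟨q, hq⟩ = 0) :
    wt f = wt (tailw c t f) + 1 := by
  have hemb : Function.Injective (fun p : Fin (c - 1 - t) =>
      (⟨p.val + t + 1, by have := p.isLt; omega⟩ : Fin c)) := by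
    intro a b hab
    have := congrArg Fin.val hab
    simp at this
    exact Fin.ext this
  have hset : (Finset.univ.filter fun p => f p = 1)
      = insert ⟨t, ht⟩ ((Finset.univ.filter fun p => tailw c t f p = 1).image
          (fun p : Fin (c - 1 - t) => (⟨p.val + t + 1, by have := p.isLt; omega⟩ : Fin c))) := by
    ext x
    simp only [mem_filter, mem_univ, true_and, mem_insert, mem_image]
    constructor
    · intro hx
      rcases lt_trichotomy x.val t with hlt | heq | hgt
      · exfalso
        have := h0 x.val x.isLt hlt
        rw [show (⟨x.val, x.isLt⟩ : Fin c) = x from Fin.ext rfl] at this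
        rw [this] at hx
        exact zmod2_ne hx
      · left
        exact Fin.ext heq
      · right
        refine ⟨⟨x.val - t - 1, by have := x.isLt; omega⟩, ?_, ?_⟩
        · rw [tailw]
          rw [fcong f _ x.isLt (by omega : x.val - t - 1 + t + 1 = x.val)]
          rw [show (⟨x.val, x.isLt⟩ : Fin c) = x from Fin.ext rfl]
          exact hx
        · refine Fin.ext ?_
          show x.val - t - 1 + t + 1 = x.val
          omega
    · rintro (rfl | ⟨p, hp, rfl⟩)
      · exact h1
      · exact hp
  rw [wt, hset, Finset.card_insert_of_notMem, wt, Finset.card_image_of_injective _ hemb,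
    Nat.add_comm]
  intro hmem
  rw [mem_image] at hmem
  obtain ⟨p, -, hp⟩ := hmem
  have := congrArg Fin.val hp
  simp at this
  omega

lemma norun_iff (c t e : ℕ) (f : Fin c → ZMod 2) (ht : t < c) (hte : t ≤ e)
    (h1 : f ⟨t, ht⟩ = 1) :
    NoZeroRun c e f ↔ NoZeroRun (c - 1 - t) e (tailw c t f) := by
  constructor
  · intro h i' hi'
    obtain ⟨j, hj⟩ := h (i' + t + 1) (by omega)
    refine ⟨j, ?_⟩
    rw [tailw]
    rw [fcong f _ (by have := j.isLt; omega : i' + t + 1 + j.val < c)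
      (by omega : i' + j.val + t + 1 = i' + t + 1 + j.val)]
    exact hj
  · intro h i hi
    by_cases hit : i ≤ t
    · refine ⟨⟨t - i, by omega⟩, ?_⟩
      rw [fcong f _ ht (by omega : i + (t - i) = t)]
      exact h1
    · obtain ⟨j, hj⟩ := h (i - t - 1) (by omega)
      refine ⟨j, ?_⟩
      rw [tailw] at hj
      rw [fcong f _ (by have := j.isLt; omega : i - t - 1 + j.val + t + 1 < c)
        (by omega : i + j.val = i - t - 1 + j.val + t + 1)]
      exact hj

/-- index of the first one -/
def fOne (c : ℕ) (f : Fin c → ZMod 2) : ℕ :=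
  if h : (Finset.univ.filter fun p => f p = 1).Nonempty
  then ((Finset.univ.filter fun p => f p = 1).min' h).val else 0

lemma fOne_spec (c : ℕ) (f : Fin c → ZMod 2) (he : ∃ p : Fin c, f p = 1) :
    ∃ h : fOne c f < c, f ⟨fOne c f, h⟩ = 1 ∧
      ∀ q (hq : q < c), q < fOne c f → f ⟨q, hq⟩ = 0 := by
  obtain ⟨p, hp⟩ := he
  have hne : (Finset.univ.filter fun p : Fin c => f p = 1).Nonempty :=
    ⟨p, by rw [mem_filter]; exact ⟨mem_univ p, hp⟩⟩
  have hval : fOne c f = ((Finset.univ.filter fun p : Fin c => f p = 1).min' hne).val := by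
    rw [fOne, dif_pos hne]
  have hmem := (Finset.univ.filter fun p : Fin c => f p = 1).min'_mem hne
  rw [mem_filter] at hmem
  have hlt : fOne c f < c := by rw [hval]; exact Fin.isLt _
  refine ⟨hlt, ?_, ?_⟩
  · calc f ⟨fOne c f, hlt⟩ = f ⟨_, Fin.isLt _⟩ := fcong f hlt (Fin.isLt _) hval
    _ = f ((Finset.univ.filter fun p : Fin c => f p = 1).min' hne) :=
        congrArg f (Fin.ext rfl)
    _ = 1 := hmem.2
  · intro q hq hlt'
    rcases zmod2_cases (f ⟨q, hq⟩) with h0 | h1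
    · exact h0
    · exfalso
      have hm : (⟨q, hq⟩ : Fin c) ∈ (Finset.univ.filter fun p : Fin c => f p = 1) := by
        rw [mem_filter]; exact ⟨mem_univ _, h1⟩
      have h2 : ((Finset.univ.filter fun p : Fin c => f p = 1).min' hne).val ≤ q :=
        Finset.min'_le _ _ hm
      omega

lemma fOne_eq (c t : ℕ) (f : Fin c → ZMod 2) (ht : t < c) (h1 : f ⟨t, ht⟩ = 1)
    (h0 : ∀ q (hq : q < c), q < t → f ⟨q, hq⟩ = 0) : fOne c f = t := by
  have hne : (Finset.univ.filter fun p : Fin c => f p = 1).Nonempty :=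
    ⟨⟨t, ht⟩, by rw [mem_filter]; exact ⟨mem_univ _, h1⟩⟩
  have hval : fOne c f = ((Finset.univ.filter fun p : Fin c => f p = 1).min' hne).val := by
    rw [fOne, dif_pos hne]
  have hmem := (Finset.univ.filter fun p : Fin c => f p = 1).min'_mem hne
  rw [mem_filter] at hmem
  have hle : ((Finset.univ.filter fun p : Fin c => f p = 1).min' hne).val ≤ t := by
    have hm : (⟨t, ht⟩ : Fin c) ∈ (Finset.univ.filter fun p : Fin c => f p = 1) := by
      rw [mem_filter]; exact ⟨mem_univ _, h1⟩
    exact Finset.min'_le _ _ hm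
  set m := (Finset.univ.filter fun p : Fin c => f p = 1).min' hne with hmdef
  rcases Nat.lt_or_ge m.val t with h | h
  · exfalso
    have h2 := h0 m.val m.isLt h
    rw [show (⟨m.val, m.isLt⟩ : Fin c) = m from Fin.ext rfl] at h2
    rw [h2] at hmem
    exact zmod2_ne hmem.2
  · omega

lemma Wf_succ (c d e : ℕ) :
    Wf c (d+1) e = ∑ t ∈ range (min (e+1) c), Wf (c-1-t) d e := by
  rw [Wf, Finset.card_eq_sum_card_fiberwise (f := fOne c) (t := range (min (e+1) c)) ?_]
  · refine Finset.sum_congr rfl fun t ht => ?_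
    rw [mem_range, lt_min_iff, Nat.lt_succ_iff] at ht
    obtain ⟨hte, htc⟩ := ht
    rw [Wf]
    refine Finset.card_bij' (fun f _ => tailw c t f) (fun f' _ => extw c t f') ?_ ?_ ?_ ?_
    · intro f hf
      simp only [mem_filter, mem_univ, true_and] at hf
      obtain ⟨⟨hw, hnr⟩, hfo⟩ := hf
      have he : ∃ p : Fin c, f p = 1 := by
        by_contra hc
        push_neg at hc
        have : wt f = 0 := (wt_eq_zero_iff c f).mpr fun p => by
          rcases zmod2_cases (f p) with h0 | h1
          · exact h0
          · exact absurd h1 (hc p)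
        omega
      obtain ⟨hlt, hone, hmin⟩ := fOne_spec c f he
      have hone' : f ⟨t, htc⟩ = 1 := (fcong f htc hlt hfo.symm).trans hone
      have hmin' : ∀ q (hq : q < c), q < t → f ⟨q, hq⟩ = 0 := by
        intro q hq h
        exact hmin q hq (by rw [hfo]; exact h)
      simp only [mem_filter, mem_univ, true_and]
      constructor
      · have := wt_succ_of c t f htc hone' hmin'
        omega
      · exact (norun_iff c t e f htc hte hone').mp hnr
    · intro f' hf'
      simp only [mem_filter, mem_univ, true_and] at hf' ⊢
      obtain ⟨hw, hnr⟩ := hf'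
      have hone : extw c t f' ⟨t, htc⟩ = 1 := by
        rw [extw, dif_neg (show ¬ t < t from by omega)]
        exact if_pos rfl
      have hmin : ∀ q (hq : q < c), q < t → extw c t f' ⟨q, hq⟩ = 0 := by
        intro q hq hlt
        rw [extw, dif_neg (show ¬ t < q from by omega)]
        exact if_neg (show ¬ q = t from by omega)
      refine ⟨⟨?_, ?_⟩, ?_⟩
      · rw [wt_succ_of c t (extw c t f') htc hone hmin, tailw_extw, hw]
      · refine (norun_iff c t e (extw c t f') htc hte hone).mpr ?_
        rw [tailw_extw]
        exact hnr
      · exact fOne_eq c t (extw c t f') htc hone hmin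
    · intro f hf
      simp only [mem_filter, mem_univ, true_and] at hf
      obtain ⟨⟨hw, hnr⟩, hfo⟩ := hf
      have he : ∃ p : Fin c, f p = 1 := by
        by_contra hc
        push_neg at hc
        have : wt f = 0 := (wt_eq_zero_iff c f).mpr fun p => by
          rcases zmod2_cases (f p) with h0 | h1
          · exact h0
          · exact absurd h1 (hc p)
        omega
      obtain ⟨hlt, hone, hmin⟩ := fOne_spec c f he
      have hone' : f ⟨t, htc⟩ = 1 := (fcong f htc hlt hfo.symm).trans hone
      have hmin' : ∀ q (hq : q < c), q < t → f ⟨q, hq⟩ = 0 := by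
        intro q hq h
        exact hmin q hq (by rw [hfo]; exact h)
      funext p
      show extw c t (tailw c t f) p = f p
      rw [extw]
      by_cases hp : t < p.val
      · rw [dif_pos hp, tailw]
        rw [fcong f _ p.isLt (by have := p.isLt; omega : p.val - t - 1 + t + 1 = p.val)]
      · rw [dif_neg hp]
        by_cases hp2 : p.val = t
        · rw [if_pos hp2]
          have := (fcong f p.isLt htc hp2).trans hone'
          rw [show (⟨p.val, p.isLt⟩ : Fin c) = p from Fin.ext rfl] at this
          exact this.symm
        · rw [if_neg hp2]
          have := hmin' p.val p.isLt (by omega)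
          rw [show (⟨p.val, p.isLt⟩ : Fin c) = p from Fin.ext rfl] at this
          exact this.symm
    · intro f' _
      exact tailw_extw c t f'
  · intro f hf
    simp only [Finset.mem_coe, mem_filter, mem_univ, true_and] at hf
    obtain ⟨hw, hnr⟩ := hf
    have he : ∃ p : Fin c, f p = 1 := by
      by_contra hc
      push_neg at hc
      have : wt f = 0 := (wt_eq_zero_iff c f).mpr fun p => by
        rcases zmod2_cases (f p) with h0 | h1
        · exact h0
        · exact absurd h1 (hc p)
      omega
    obtain ⟨hlt, hone, hmin⟩ := fOne_spec c f he
    rw [Finset.mem_coe, mem_range, lt_min_iff, Nat.lt_succ_iff]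
    refine ⟨?_, hlt⟩
    by_contra hc
    push_neg at hc
    obtain ⟨j, hj⟩ := hnr 0 (by omega)
    have := hmin (0 + j.val) (by have := j.isLt; omega) (by have := j.isLt; omega)
    rw [this] at hj
    exact zmod2_ne hj


lemma Cb_one (e n : ℕ) : Cb e 1 n = if n ≤ e then 1 else 0 := by
  have hiff : (∀ i : Fin 1, ![n] i ≤ e) ↔ n ≤ e := by
    constructor
    · intro h; simpa using h 0
    · intro h i; fin_cases i; simpa using h
  rw [Cb, Finset.Nat.antidiagonalTuple_one, Finset.filter_singleton]
  by_cases h : n ≤ e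
  · rw [if_pos (hiff.mpr h), if_pos h, card_singleton]
  · rw [if_neg (fun hc => h (hiff.mp hc)), if_neg h, card_empty]

lemma Wf_eq (e : ℕ) : ∀ d c, d ≤ c → Wf c d e = Cb e (d+1) (c - d) := by
  intro d
  induction d with
  | zero =>
    intro c _
    rw [Wf_zero, Cb_one, Nat.sub_zero]
  | succ d ih =>
    intro c hdc
    rw [Wf_succ, Cb_succ]
    have hsub : range (min (e+1) (c-(d+1)+1)) ⊆ range (min (e+1) c) := by
      apply range_subset_range.mpr
      have h1 := Nat.min_le_left (e+1) (c-(d+1)+1)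
      have h2 := Nat.min_le_right (e+1) (c-(d+1)+1)
      rcases Nat.le_total (e+1) c with h | h
      · rw [Nat.min_eq_left h]; omega
      · rw [Nat.min_eq_right h]; omega
    rw [← Finset.sum_subset hsub ?_]
    · refine Finset.sum_congr rfl fun t ht => ?_
      rw [mem_range, lt_min_iff] at ht
      have hd : d ≤ c - 1 - t := by omega
      rw [ih (c-1-t) hd]
      congr 1
      omega
    · intro x hx hnx
      rw [mem_range, lt_min_iff] at hx
      rw [mem_range, lt_min_iff] at hnx
      push_neg at hnx
      apply Wf_eq_zero_of_lt
      have := hnx hx.1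
      omega

lemma natCard_eq (c d e : ℕ) :
    Nat.card {f : Fin c → ZMod 2 // wt f = d ∧ NoZeroRun c e f} = Wf c d e := by
  rw [Nat.card_eq_fintype_card, Wf, Fintype.card_subtype]

/-- The number of binary words `f : Fin c → ZMod 2` of Hamming weight exactly `d`
containing no run of `e + 1` consecutive zeros equals, as an integer,
`Σ_{j ∈ J} (-1)^j · C(d+1, j) · C(c - j(e+1), d)` where
`J = { j : 0 ≤ j ≤ d + 1, c - j(e+1) ≥ 0 }`. -/
theorem stmt1 (c d e : ℕ) :
    (Nat.card {f : Fin c → ZMod 2 // wt f = d ∧ NoZeroRun c e f} : ℤ) =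
      ∑ j ∈ (Finset.range (d + 2)).filter (fun j => j * (e + 1) ≤ c),
        (-1 : ℤ) ^ j * ((d + 1).choose j : ℤ) * (((c - j * (e + 1)).choose d : ℕ) : ℤ) := by
  by_cases hdc : d ≤ c
  · rw [natCard_eq, Wf_eq e d c hdc, Cb_eq_sum, Finset.sum_filter]
    refine Finset.sum_congr rfl fun j hj => ?_
    rw [mem_range] at hj
    rw [adt_card d (c - d - j*(e+1))]
    by_cases h1 : j*(e+1) ≤ c - d
    · rw [if_pos h1, if_pos (by omega : j*(e+1) ≤ c)]
      rw [show c - d - j*(e+1) + d = c - j*(e+1) from by omega]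
    · rw [if_neg h1]
      by_cases h2 : j*(e+1) ≤ c
      · rw [if_pos h2, Nat.choose_eq_zero_of_lt (by omega : c - j*(e+1) < d)]
        simp
      · rw [if_neg h2, mul_zero]
  · push_neg at hdc
    have hempty : IsEmpty {f : Fin c → ZMod 2 // wt f = d ∧ NoZeroRun c e f} := by
      constructor
      rintro ⟨f, hw, -⟩
      have := wt_le c f
      omega
    rw [Nat.card_of_isEmpty]
    rw [Nat.cast_zero]
    symm
    apply Finset.sum_eq_zero
    intro j hj
    rw [Nat.choose_eq_zero_of_lt (lt_of_le_of_lt (Nat.sub_le _ _) hdc)]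
    simp
end

section
/- Let v and u be natural numbers with 2 ≤ u ≤ v − 1. The number of binary words w : Fin v → ZMod 2 that are end-around phased-burst errors of burst length u' with error-free gap g = v − u', for some u' with 2 ≤ u' ≤ u, equals v · Σ_{x=0}^{u−2} Σ_{y=0}^{x} Σ_{z=0}^{v−x−3} F(x, y, z, v). -/
def Aform (c d e : ℕ) : ℤ :=
  ∑ j ∈ (Finset.range (d + 2)).filter (fun j => j * (e + 1) ≤ c),
    (-1 : ℤ) ^ j * ((d + 1).choose j : ℤ) * (((c - j * (e + 1)).choose d : ℕ) : ℤ)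

def Bform (x y z : ℕ) : ℤ :=
  Aform x y z - (if z = 0 then 0 else Aform x y (z - 1))

def Fform (x y z v : ℕ) : ℤ :=
  if y = 0 ∧ x = z ∧ x < v / 2 - 2 then 1 else Bform x y z

namespace EAB

open Finset
open scoped Classical

noncomputable section

/-! ### basic fin/cyc lemmas -/

lemma cycIdx_val {v : ℕ} (s : Fin v) (j : ℕ) : (cycIdx s j).val = (s.val + j) % v := rfl

lemma cycIdx_mod {v : ℕ} (s : Fin v) (j : ℕ) : cycIdx s (j % v) = cycIdx s j := by
  apply Fin.ext
  simp only [cycIdx_val]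
  conv_lhs => rw [Nat.add_mod, Nat.mod_mod]
  rw [← Nat.add_mod]

lemma cycIdx_add {v : ℕ} (s : Fin v) (a b : ℕ) :
    cycIdx (cycIdx s a) b = cycIdx s (a + b) := by
  apply Fin.ext
  simp only [cycIdx_val]
  rw [Nat.mod_add_mod, Nat.add_assoc]

lemma cycIdx_zero {v : ℕ} (s : Fin v) : cycIdx s 0 = s := by
  apply Fin.ext
  simp only [cycIdx_val, Nat.add_zero]
  exact Nat.mod_eq_of_lt s.isLt

lemma cycIdx_add_period {v : ℕ} (s : Fin v) (a : ℕ) : cycIdx s (a + v) = cycIdx s a := by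
  apply Fin.ext
  simp only [cycIdx_val, ← Nat.add_assoc, Nat.add_mod_right]

/-- the relative coordinate of `p` in the frame of `s` -/
def relc {v : ℕ} (s p : Fin v) : ℕ := (p.val + (v - s.val)) % v

lemma relc_lt {v : ℕ} (s p : Fin v) : relc s p < v := Nat.mod_lt _ s.pos

lemma cycIdx_relc {v : ℕ} (s p : Fin v) : cycIdx s (relc s p) = p := by
  apply Fin.ext
  simp only [cycIdx_val, relc]
  rw [Nat.add_mod_mod]
  have hs : s.val ≤ v := le_of_lt s.isLt
  have : s.val + (p.val + (v - s.val)) = p.val + v := by omega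
  rw [this, Nat.add_mod_right, Nat.mod_eq_of_lt p.isLt]

lemma relc_cycIdx {v : ℕ} (s : Fin v) (j : ℕ) : relc s (cycIdx s j) = j % v := by
  simp only [relc, cycIdx_val]
  rw [Nat.mod_add_mod]
  have hs : s.val ≤ v := le_of_lt s.isLt
  have : s.val + j + (v - s.val) = j + v := by omega
  rw [this, Nat.add_mod_right]

lemma relc_cycIdx_of_lt {v : ℕ} (s : Fin v) (j : ℕ) (h : j < v) : relc s (cycIdx s j) = j := by
  rw [relc_cycIdx, Nat.mod_eq_of_lt h]

/-! ### string predicates -/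

/-- all (complete) runs of zeros in `t` have length `< g` -/
def ZR (n g : ℕ) (t : Fin n → ZMod 2) : Prop :=
  ∀ a L : ℕ, (h : a + L ≤ n) →
    (∀ j, (hj : j < L) → t ⟨a + j, by omega⟩ = 0) → L < g

def ones {n : ℕ} (t : Fin n → ZMod 2) : ℕ := #(univ.filter fun i => t i = 1)

def SCs (n y g : ℕ) : Finset (Fin n → ZMod 2) :=
  univ.filter fun t => ones t = y ∧ ZR n g t

def BCs (k m e : ℕ) : Finset (Fin k → ℕ) :=
  (Finset.Nat.antidiagonalTuple k m).filter fun f => ∀ i, f i ≤ e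

lemma zmod2_cases (z : ZMod 2) : z = 0 ∨ z = 1 := by revert z; decide

/-! ### composition counting -/

lemma BCs_cons (k m e : ℕ) :
    #(BCs (k+1) m e) = ∑ i ∈ range (min e m + 1), #(BCs k (m - i) e) := by
  rw [← Finset.card_sigma]
  refine (Finset.card_bij (fun (a : Σ _ : ℕ, Fin k → ℕ) (_ : a ∈ (range (min e m + 1)).sigma fun i => BCs k (m - i) e) => Fin.cons a.1 a.2) ?_ ?_ ?_).symm
  · rintro ⟨i, f⟩ ha
    simp only [Finset.mem_sigma, Finset.mem_range, BCs, Finset.mem_filter,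
      Finset.Nat.mem_antidiagonalTuple] at ha ⊢
    obtain ⟨hi, hf, hb⟩ := ha
    refine ⟨?_, ?_⟩
    · rw [Fin.sum_cons, hf]; omega
    · intro j
      refine Fin.cases ?_ ?_ j
      · simpa using by omega
      · intro j'; simpa using hb j'
  · rintro ⟨i, f⟩ ha ⟨i', f'⟩ ha' h
    have h0 : i = i' := by
      have := congrFun h 0
      simpa using this
    subst h0
    have : f = f' := by
      funext j
      have := congrFun h j.succ
      simpa using this
    simp [this]
  · intro g hg
    simp only [BCs, Finset.mem_filter, Finset.Nat.mem_antidiagonalTuple] at hg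
    obtain ⟨hsum, hb⟩ := hg
    have h0 : g 0 ≤ m := by
      rw [← hsum, Fin.sum_univ_succ]
      exact Nat.le_add_right _ _
    refine ⟨⟨g 0, Fin.tail g⟩, ?_, ?_⟩
    · simp only [Finset.mem_sigma, Finset.mem_range, BCs, Finset.mem_filter,
        Finset.Nat.mem_antidiagonalTuple]
      refine ⟨by have := hb 0; omega, ?_, fun j => hb j.succ⟩
      have : g 0 + ∑ i, Fin.tail g i = m := by
        rw [← Fin.sum_cons, Fin.cons_self_tail, hsum]
      omega
    · exact Fin.cons_self_tail g

lemma BCs_one (m e : ℕ) : #(BCs 1 m e) = if m ≤ e then 1 else 0 := by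
  rw [BCs, Finset.Nat.antidiagonalTuple_one, Finset.filter_singleton]
  have : (∀ i : Fin 1, ![m] i ≤ e) ↔ m ≤ e := by
    constructor
    · intro h; simpa using h 0
    · intro h i; fin_cases i; simpa using h
  split_ifs with h1 h2 h2 <;> simp_all

lemma adt_eq_BCs (k m : ℕ) : Finset.Nat.antidiagonalTuple k m = BCs k m m := by
  rw [BCs]
  refine (Finset.filter_eq_self.mpr ?_).symm
  intro f hf i
  rw [Finset.Nat.mem_antidiagonalTuple] at hf
  rw [← hf]
  exact Finset.single_le_sum (fun _ _ => Nat.zero_le _) (Finset.mem_univ i)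

lemma BCs_mono_bound (k m e e' : ℕ) (h : m ≤ e) (h' : m ≤ e') : BCs k m e = BCs k m e' := by
  unfold BCs
  apply Finset.filter_congr
  intro f hf
  rw [Finset.Nat.mem_antidiagonalTuple] at hf
  have hb : ∀ i, f i ≤ m := by
    intro i; rw [← hf]
    exact Finset.single_le_sum (fun _ _ => Nat.zero_le _) (Finset.mem_univ i)
  exact ⟨fun _ i => le_trans (hb i) h', fun _ i => le_trans (hb i) h⟩

lemma card_adt (k m : ℕ) : #(Finset.Nat.antidiagonalTuple (k+1) m) = (m + k).choose k := by
  induction k generalizing m with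
  | zero => simp [Finset.Nat.antidiagonalTuple_one]
  | succ k ih =>
    rw [adt_eq_BCs, BCs_cons, Nat.min_self]
    have : ∀ i ∈ range (m + 1), #(BCs (k+1) (m - i) m) = (m - i + k).choose k := by
      intro i hi
      rw [← BCs_mono_bound (k+1) (m-i) (m-i) m (le_refl _) (by omega), ← adt_eq_BCs, ih]
    rw [Finset.sum_congr rfl this]
    rw [show ∑ x ∈ range (m+1), (m - x + k).choose k
        = ∑ x ∈ range (m+1), ((m + 1 - 1 - x) + k).choose k from
      Finset.sum_congr rfl (fun i hi => by congr 1)]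
    rw [Finset.sum_range_reflect (fun i => (i + k).choose k) (m+1), Nat.sum_range_add_choose]
    congr 1

/-! ### inclusion-exclusion -/

lemma card_shifted (y m e : ℕ) (J : Finset (Fin (y+1))) :
    #((Finset.Nat.antidiagonalTuple (y+1) m).filter (fun f => ∀ i ∈ J, e + 1 ≤ f i)) =
      if #J * (e+1) ≤ m then (m - #J * (e+1) + y).choose y else 0 := by
  split_ifs with hc
  · rw [← card_adt y (m - #J * (e+1))]
    refine (Finset.card_bij
      (fun (g : Fin (y+1) → ℕ) (_ : g ∈ Finset.Nat.antidiagonalTuple (y+1) (m - #J * (e+1)))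
        => fun i => g i + if i ∈ J then e + 1 else 0) ?_ ?_ ?_).symm
    · intro g hg
      rw [Finset.Nat.mem_antidiagonalTuple] at hg
      rw [Finset.mem_filter, Finset.Nat.mem_antidiagonalTuple]
      constructor
      · rw [Finset.sum_add_distrib, hg, Finset.sum_ite_mem, Finset.univ_inter,
          Finset.sum_const, smul_eq_mul]
        omega
      · intro i hi
        simp [hi]
    · intro g1 h1 g2 h2 h
      funext i
      have := congrFun h i
      by_cases hi : i ∈ J <;> simp [hi] at this <;> omega
    · intro f hf
      rw [Finset.mem_filter, Finset.Nat.mem_antidiagonalTuple] at hf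
      obtain ⟨hsum, hge⟩ := hf
      refine ⟨fun i => f i - if i ∈ J then e + 1 else 0, ?_, ?_⟩
      · rw [Finset.Nat.mem_antidiagonalTuple]
        have : ∀ i, (f i - if i ∈ J then e + 1 else 0) + (if i ∈ J then e + 1 else 0) = f i := by
          intro i
          by_cases hi : i ∈ J <;> simp [hi]
          exact Nat.sub_add_cancel (hge i hi)
        have h2 : (∑ i, (f i - if i ∈ J then e + 1 else 0))
            + (∑ i, if i ∈ J then e + 1 else 0) = m := by
          rw [← Finset.sum_add_distrib, Finset.sum_congr rfl (fun i _ => this i), hsum]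
        rw [Finset.sum_ite_mem, Finset.univ_inter, Finset.sum_const, smul_eq_mul] at h2
        omega
      · funext i
        by_cases hi : i ∈ J <;> simp [hi]
        exact Nat.sub_add_cancel (hge i hi)
  · rw [Finset.card_eq_zero, Finset.filter_eq_empty_iff]
    intro f hf
    rw [Finset.Nat.mem_antidiagonalTuple] at hf
    intro hge
    have : ∑ i ∈ J, (e+1) ≤ ∑ i ∈ J, f i := Finset.sum_le_sum (fun i hi => hge i hi)
    have h2 : ∑ i ∈ J, f i ≤ ∑ i, f i :=
      Finset.sum_le_sum_of_subset (Finset.subset_univ J)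
    rw [Finset.sum_const, smul_eq_mul] at this
    omega

lemma card_BCs (y m e : ℕ) :
    (#(BCs (y+1) m e) : ℤ) =
      ∑ j ∈ (range (y + 2)).filter (fun j => j * (e + 1) ≤ m),
        (-1 : ℤ) ^ j * ((y + 1).choose j : ℤ) * (((m - j * (e + 1) + y).choose y : ℕ) : ℤ) := by
  have step1 : (#(BCs (y+1) m e) : ℤ)
      = ∑ f ∈ Finset.Nat.antidiagonalTuple (y+1) m, if ∀ i, f i ≤ e then (1:ℤ) else 0 := by
    rw [BCs, Finset.card_filter]
    push_cast
    rfl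
  have step2 : ∀ f : Fin (y+1) → ℕ,
      (if ∀ i, f i ≤ e then (1:ℤ) else 0)
        = ∑ J ∈ (univ.filter fun i => e + 1 ≤ f i).powerset, (-1 : ℤ) ^ #J := by
    intro f
    rw [Finset.sum_powerset_neg_one_pow_card]
    have hempty : ((univ.filter fun i => e + 1 ≤ f i) = ∅) ↔ ∀ i, f i ≤ e := by
      rw [Finset.filter_eq_empty_iff]
      constructor
      · intro h i
        have := h (Finset.mem_univ i)
        exact Nat.lt_succ_iff.mp (Nat.lt_of_not_le this)
      · intro h i _
        exact Nat.not_le.mpr (Nat.lt_succ_of_le (h i))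
    simp only [hempty]
  have step3 : ∀ f : Fin (y+1) → ℕ,
      (univ.filter fun i => e + 1 ≤ f i).powerset
        = (univ : Finset (Fin (y+1))).powerset.filter
            (fun J => ∀ i ∈ J, e + 1 ≤ f i) := by
    intro f
    ext J
    simp only [Finset.mem_powerset, Finset.mem_filter, Finset.subset_iff, Finset.mem_filter,
      Finset.mem_univ, true_and]
    tauto
  rw [step1, Finset.sum_congr rfl (fun f _ => step2 f),
    Finset.sum_congr rfl (fun f _ => by rw [step3 f, Finset.sum_filter]),
    Finset.sum_comm]
  have step4 : ∀ J ∈ (univ : Finset (Fin (y+1))).powerset,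
      (∑ f ∈ Finset.Nat.antidiagonalTuple (y+1) m,
        if ∀ i ∈ J, e + 1 ≤ f i then (-1:ℤ)^#J else 0)
      = (-1:ℤ)^#J * (if #J * (e+1) ≤ m then ((m - #J * (e+1) + y).choose y : ℤ) else 0) := by
    intro J _
    rw [← Finset.sum_filter, Finset.sum_const, card_shifted y m e J]
    split_ifs with h <;> simp <;> ring
  rw [Finset.sum_congr rfl step4, Finset.sum_powerset_apply_card
    (fun j => (-1:ℤ)^j * (if j * (e+1) ≤ m then ((m - j * (e+1) + y).choose y : ℤ) else 0))]
  rw [Finset.sum_filter]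
  rw [Finset.card_univ, Fintype.card_fin]
  apply Finset.sum_congr rfl
  intro j _
  rw [nsmul_eq_mul]
  split_ifs with h <;> push_cast <;> ring

lemma Aform_eq_card_BCs (x y e : ℕ) (hyx : y ≤ x) :
    Aform x y e = (#(BCs (y+1) (x - y) e) : ℤ) := by
  rw [card_BCs, Aform, Finset.sum_filter, Finset.sum_filter]
  apply Finset.sum_congr rfl
  intro j _
  by_cases h1 : j * (e+1) ≤ x - y
  · rw [if_pos h1, if_pos (by omega)]
    have : x - j * (e+1) = x - y - j * (e+1) + y := by omega
    rw [this]
  · rw [if_neg h1]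
    by_cases h2 : j * (e+1) ≤ x
    · rw [if_pos h2]
      have : x - j * (e+1) < y := by omega
      rw [Nat.choose_eq_zero_of_lt this]
      simp
    · rw [if_neg h2]

/-! ### strings = compositions -/

lemma ones_le {n : ℕ} (t : Fin n → ZMod 2) : ones t ≤ n := by
  have := Finset.card_filter_le (univ : Finset (Fin n)) (fun i => t i = 1)
  simpa [ones] using this

lemma SCs_zero (n y g : ℕ) (h : n < y) : SCs n y g = ∅ := by
  rw [Finset.eq_empty_iff_forall_notMem]
  intro t ht
  rw [SCs, Finset.mem_filter] at ht
  have := ones_le t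
  omega

lemma ones_eq_zero_iff {n : ℕ} (t : Fin n → ZMod 2) : ones t = 0 ↔ ∀ i, t i = 0 := by
  rw [ones, Finset.card_eq_zero, Finset.filter_eq_empty_iff]
  constructor
  · intro h i
    rcases zmod2_cases (t i) with h0 | h1
    · exact h0
    · exact absurd h1 (h (Finset.mem_univ i))
  · intro h i _
    rw [h i]
    decide

lemma SCs_no_ones (n g : ℕ) : #(SCs n 0 g) = if n < g then 1 else 0 := by
  have hz : ∀ t : Fin n → ZMod 2, ZR n g t → (∀ i, t i = 0) → n < g := by
    intro t hZ h0
    exact hZ 0 n (by omega) (fun j hj => h0 _)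
  split_ifs with h
  · rw [Finset.card_eq_one]
    refine ⟨fun _ => 0, ?_⟩
    rw [Finset.eq_singleton_iff_unique_mem]
    constructor
    · rw [SCs, Finset.mem_filter]
      refine ⟨Finset.mem_univ _, ?_, ?_⟩
      · rw [ones_eq_zero_iff]; intro i; rfl
      · intro a L hL hzero
        omega
    · intro t ht
      rw [SCs, Finset.mem_filter, ones_eq_zero_iff] at ht
      funext i
      exact ht.2.1 i
  · rw [Finset.card_eq_zero, Finset.eq_empty_iff_forall_notMem]
    intro t ht
    rw [SCs, Finset.mem_filter, ones_eq_zero_iff] at ht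
    exact h (hz t ht.2.2 ht.2.1)

def psi (n k : ℕ) (t' : Fin (n - 1 - k) → ZMod 2) (i : Fin n) : ZMod 2 :=
  if _h1 : i.val < k then 0 else if h2 : i.val = k then 1 else
    t' ⟨i.val - k - 1, by have := i.isLt; omega⟩

lemma psi_lt {n k : ℕ} {t' : Fin (n - 1 - k) → ZMod 2} {i : Fin n} (h : i.val < k) :
    psi n k t' i = 0 := by
  rw [psi, dif_pos h]

lemma psi_eq {n k : ℕ} {t' : Fin (n - 1 - k) → ZMod 2} {i : Fin n} (h : i.val = k) :
    psi n k t' i = 1 := by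
  rw [psi, dif_neg (by omega), dif_pos h]

lemma psi_gt {n k : ℕ} {t' : Fin (n - 1 - k) → ZMod 2} {i : Fin n} (h : k < i.val) :
    psi n k t' i = t' ⟨i.val - k - 1, by have := i.isLt; omega⟩ := by
  rw [psi, dif_neg (by omega), dif_neg (by omega)]

lemma ones_sum {n : ℕ} (t : Fin n → ZMod 2) :
    ones t = ∑ i : Fin n, if t i = 1 then 1 else 0 := by
  rw [ones, Finset.card_filter]

lemma ones_psi (n k : ℕ) (hk : k < n) (t' : Fin (n - 1 - k) → ZMod 2) :
    ones (psi n k t') = ones t' + 1 := by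
  set F : ℕ → ℕ := fun j => if j < k then 0 else if j = k then 1
      else if h : j - k - 1 < n - 1 - k then (if t' ⟨j - k - 1, h⟩ = 1 then 1 else 0) else 0
    with hFdef
  have hF : ∀ i : Fin n, (if psi n k t' i = 1 then 1 else 0) = F i.val := by
    intro i
    rcases lt_trichotomy i.val k with h1 | h1 | h1
    · rw [psi_lt h1, hFdef]
      simp [h1]
    · rw [psi_eq h1, hFdef]
      simp [h1]
    · rw [psi_gt h1, hFdef]
      have hlt : i.val - k - 1 < n - 1 - k := by have := i.isLt; omega
      simp only [if_neg (by omega : ¬ i.val < k), if_neg (by omega : ¬ i.val = k),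
        dif_pos hlt]
  have hG : ∀ j : Fin (n - 1 - k), (if t' j = 1 then 1 else 0) = F (k + 1 + j.val) := by
    intro j
    have hlt : k + 1 + j.val - k - 1 < n - 1 - k := by have := j.isLt; omega
    rw [hFdef]
    simp only [if_neg (by omega : ¬ k + 1 + j.val < k), if_neg (by omega : ¬ k + 1 + j.val = k),
      dif_pos hlt]
    have hj : (⟨k + 1 + j.val - k - 1, hlt⟩ : Fin (n - 1 - k)) = j := Fin.ext (by simp; omega)
    rw [hj]
  rw [ones_sum, Finset.sum_congr rfl (fun i _ => hF i), Fin.sum_univ_eq_sum_range F n]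
  rw [ones_sum, Finset.sum_congr rfl (fun j _ => hG j),
    Fin.sum_univ_eq_sum_range (fun j => F (k + 1 + j)) (n - 1 - k)]
  rw [← Finset.sum_range_add_sum_Ico F (show k + 1 ≤ n by omega)]
  have e1 : ∑ j ∈ range (k+1), F j = 1 := by
    rw [Finset.sum_range_succ]
    have : ∑ j ∈ range k, F j = 0 := by
      apply Finset.sum_eq_zero
      intro j hj
      rw [Finset.mem_range] at hj
      rw [hFdef]
      simp [hj]
    rw [this, hFdef]
    simp
  have e2 : ∑ j ∈ Finset.Ico (k+1) n, F j = ∑ j ∈ range (n-1-k), F (k+1+j) := by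
    rw [Finset.sum_Ico_eq_sum_range]
    have : n - (k+1) = n - 1 - k := by omega
    rw [this]
  rw [e1, e2, Nat.add_comm]

lemma ZR_shift {n g : ℕ} (t : Fin n → ZMod 2) (k : ℕ) (hk : k < n) (hZ : ZR n g t) :
    ZR (n - 1 - k) g (fun j : Fin (n - 1 - k) => t ⟨k + 1 + j.val, by have := j.isLt; omega⟩) := by
  intro a L hL hzero
  refine hZ (k + 1 + a) L (by omega) ?_
  intro j hj
  have := hzero j hj
  have heq : (⟨k + 1 + a + j, by omega⟩ : Fin n) = ⟨k + 1 + (a + j), by omega⟩ := by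
    apply Fin.ext; simp; omega
  rw [heq]
  exact this

lemma ZR_psi {n k e : ℕ} (hk : k < n) (hke : k ≤ e) {t' : Fin (n - 1 - k) → ZMod 2}
    (hZ : ZR (n - 1 - k) (e + 1) t') : ZR n (e + 1) (psi n k t') := by
  intro a L hL hzero
  by_contra hcon
  push_neg at hcon
  -- window of length L ≥ e+1 > k of zeros
  by_cases hak : a ≤ k
  · -- the window covers position k since a ≤ k ≤ a + e < a + L
    have h1 : psi n k t' ⟨a + (k - a), by omega⟩ = 1 := psi_eq (by simp; omega)
    have h0 := hzero (k - a) (by omega)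
    rw [h1] at h0
    exact one_ne_zero h0
  · -- window inside the tail
    push_neg at hak
    have : L < e + 1 := by
      refine hZ (a - k - 1) L (by omega) ?_
      intro j hj
      have h0 := hzero j hj
      rw [psi_gt (by simp; omega : k < ((⟨a + j, by omega⟩ : Fin n) : ℕ))] at h0
      convert h0 using 2
      apply Fin.ext
      simp
      omega
    omega

lemma SCs_cons (n y e : ℕ) (hn : 1 ≤ n) :
    #(SCs n (y+1) (e+1)) = ∑ k ∈ range (min e (n-1) + 1), #(SCs (n-1-k) y (e+1)) := by
  rw [← Finset.card_sigma]
  refine (Finset.card_bij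
    (fun (a : Σ _ : ℕ, Fin (n - 1 - _) → ZMod 2)
      (_ : a ∈ (range (min e (n-1) + 1)).sigma fun k => SCs (n-1-k) y (e+1)) => psi n a.1 a.2)
    ?_ ?_ ?_).symm
  · rintro ⟨k, t'⟩ ha
    rw [Finset.mem_sigma, Finset.mem_range] at ha
    obtain ⟨hk, ht'⟩ := ha
    have hk0 : k < min e (n-1) + 1 := hk
    have hm1 := Nat.min_le_right e (n-1)
    have hm2 := Nat.min_le_left e (n-1)
    rw [SCs, Finset.mem_filter] at ht' ⊢
    obtain ⟨-, hone, hZ⟩ := ht'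
    have hkn : k < n := by omega
    refine ⟨Finset.mem_univ _, ?_, ZR_psi hkn (by omega) hZ⟩
    rw [ones_psi n k hkn, hone]
  · rintro ⟨k, t'⟩ ha ⟨l, s'⟩ hb h
    rw [Finset.mem_sigma, Finset.mem_range] at ha hb
    have ha0 : k < min e (n-1) + 1 := ha.1
    have hb0 : l < min e (n-1) + 1 := hb.1
    have hm1 := Nat.min_le_right e (n-1)
    have hm2 := Nat.min_le_left e (n-1)
    have hkn : k < n := by omega
    have hln : l < n := by omega
    have hkey : ∀ (k' l' : ℕ) (hk' : k' < n) (hl' : l' < n)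
        (t'' : Fin (n - 1 - k') → ZMod 2) (s'' : Fin (n - 1 - l') → ZMod 2),
        k' < l' → psi n k' t'' ≠ psi n l' s'' := by
      intro k' l' hk' hl' t'' s'' hlt heq
      have h1 : psi n k' t'' ⟨k', hk'⟩ = 1 := psi_eq rfl
      have h0 : psi n l' s'' ⟨k', hk'⟩ = 0 := psi_lt hlt
      rw [congrFun heq ⟨k', hk'⟩, h0] at h1
      exact one_ne_zero h1.symm
    have hkl : k = l := by
      rcases lt_trichotomy k l with hc | hc | hc
      · exact absurd h (hkey k l hkn hln t' s' hc)
      · exact hc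
      · exact absurd h.symm (hkey l k hln hkn s' t' hc)
    subst hkl
    have h' : psi n k t' = psi n k s' := h
    have hts : t' = s' := by
      funext j
      have hjn : k + 1 + j.val < n := by have := j.isLt; omega
      have e1 : psi n k t' ⟨k + 1 + j.val, hjn⟩ = t' j := by
        rw [psi_gt (by simp; omega)]
        congr 1
        apply Fin.ext
        simp
        omega
      have e2 : psi n k s' ⟨k + 1 + j.val, hjn⟩ = s' j := by
        rw [psi_gt (by simp; omega)]
        congr 1
        apply Fin.ext
        simp
        omega
      rw [← e1, congrFun h' ⟨k + 1 + j.val, hjn⟩, e2]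
    rw [hts]
  · intro t ht
    rw [SCs, Finset.mem_filter] at ht
    obtain ⟨-, hone, hZ⟩ := ht
    have hpos : 0 < #(univ.filter fun i => t i = 1) := by
      rw [← ones]; omega
    obtain ⟨hne⟩ := Finset.card_pos.mp hpos
    set S := univ.filter fun i : Fin n => t i = 1 with hS
    have hSne : S.Nonempty := Finset.card_pos.mp (by rw [hS]; exact hpos)
    set kk : Fin n := S.min' hSne with hkk
    have hkS : kk ∈ S := Finset.min'_mem _ _
    have hkmin : ∀ i ∈ S, kk ≤ i := fun i hi => Finset.min'_le _ _ hi
    have htk : t kk = 1 := (Finset.mem_filter.mp hkS).2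
    have hzero_lt : ∀ i : Fin n, i.val < kk.val → t i = 0 := by
      intro i hi
      rcases zmod2_cases (t i) with h0 | h1
      · exact h0
      · have h2 : kk.val ≤ i.val := hkmin i (Finset.mem_filter.mpr ⟨Finset.mem_univ _, h1⟩)
        omega
    have hke : kk.val ≤ e := by
      have := hZ 0 kk.val (by have := kk.isLt; omega)
        (fun j hj => hzero_lt ⟨0 + j, by have := kk.isLt; omega⟩ (by simpa using hj))
      omega
    set t' : Fin (n - 1 - kk.val) → ZMod 2 :=
      fun j => t ⟨kk.val + 1 + j.val, by have := j.isLt; omega⟩ with ht'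
    have hpsit : psi n kk.val t' = t := by
      funext i
      rcases lt_trichotomy i.val kk.val with hc | hc | hc
      · rw [psi_lt hc, hzero_lt i hc]
      · rw [psi_eq hc]
        have : i = kk := Fin.ext hc
        rw [this, htk]
      · rw [psi_gt hc]
        show t ⟨kk.val + 1 + (i.val - kk.val - 1), by have := i.isLt; omega⟩ = t i
        congr 1
        apply Fin.ext
        show kk.val + 1 + (i.val - kk.val - 1) = i.val
        omega
    refine ⟨⟨kk.val, t'⟩, ?_, hpsit⟩
    rw [Finset.mem_sigma, Finset.mem_range]
    have hkn : kk.val < n := kk.isLt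
    constructor
    · show kk.val < min e (n-1) + 1
      have := Nat.le_min.mpr ⟨hke, show kk.val ≤ n - 1 by omega⟩
      omega
    · show t' ∈ SCs (n - 1 - kk.val) y (e+1)
      rw [SCs, Finset.mem_filter]
      refine ⟨Finset.mem_univ _, ?_, ?_⟩
      · have := ones_psi n kk.val hkn t'
        rw [hpsit] at this
        omega
      · exact ZR_shift t kk.val kk.isLt hZ

lemma SCs_eq_BCs (y : ℕ) : ∀ n e : ℕ, y ≤ n → #(SCs n y (e+1)) = #(BCs (y+1) (n - y) e) := by
  induction y with
  | zero =>
    intro n e _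
    rw [SCs_no_ones, BCs_one]
    simp only [Nat.sub_zero]
    split_ifs with h1 h2 h2 <;> omega
  | succ y ih =>
    intro n e hyn
    have hn : 1 ≤ n := by omega
    rw [SCs_cons n y e hn, BCs_cons]
    set m := n - (y + 1) with hm
    have hmn : m ≤ n - 1 := by omega
    have hsub : range (min e m + 1) ⊆ range (min e (n-1) + 1) := by
      apply Finset.range_subset_range.mpr
      have h1 := Nat.le_min.mpr ⟨Nat.min_le_left e m,
        le_trans (Nat.min_le_right e m) hmn⟩
      omega
    rw [← Finset.sum_subset hsub]
    · apply Finset.sum_congr rfl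
      intro k hk
      rw [Finset.mem_range] at hk
      have hk' : k ≤ min e m := by omega
      have h1 := Nat.min_le_right e m
      have hidx : n - 1 - k - y = m - k := by omega
      rw [ih (n - 1 - k) e (by omega), hidx]
    · intro k hk hnk
      rw [Finset.mem_range] at hk hnk
      push_neg at hnk
      have h1 := Nat.min_le_right e m
      have h2 := Nat.min_le_left e m
      have h3 := Nat.min_le_left e (n-1)
      have hkm : m < k := by
        rcases le_or_gt k m with hc | hc
        · have h5 : k ≤ e := by omega
          have h6 : k ≤ min e m := Nat.le_min.mpr ⟨h5, hc⟩
          omega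
        · exact hc
      rw [Finset.card_eq_zero]
      apply SCs_zero
      omega

lemma card_ZR (x e : ℕ) :
    #(univ.filter (ZR x (e+1))) = ∑ y ∈ range (x + 1), #(SCs x y (e+1)) := by
  rw [Finset.card_eq_sum_card_fiberwise
    (f := fun t : Fin x → ZMod 2 => ones t) (t := range (x+1))]
  · apply Finset.sum_congr rfl
    intro y _
    congr 1
    ext t
    rw [SCs, Finset.mem_filter, Finset.mem_filter, Finset.mem_filter]
    constructor
    · rintro ⟨⟨-, hZ⟩, hone⟩
      exact ⟨Finset.mem_univ _, hone, hZ⟩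
    · rintro ⟨-, hone, hZ⟩
      exact ⟨⟨Finset.mem_univ _, hZ⟩, hone⟩
  · intro t _
    simp only [Finset.mem_coe, Finset.mem_range]
    have := ones_le t
    omega

/-! ### Fform sums -/

lemma Aform_zero (x e : ℕ) : Aform x 0 e = if e + 1 ≤ x then 0 else 1 := by
  rw [Aform, Finset.sum_filter]
  rw [show (0:ℕ) + 2 = 2 from rfl, Finset.sum_range_succ, Finset.sum_range_succ,
    Finset.sum_range_zero]
  simp only [Nat.choose_zero_right, Nat.choose_self, Nat.choose_one_right, pow_zero, pow_one,
    Nat.cast_one, Nat.zero_mul, Nat.one_mul, Nat.zero_le, if_true]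
  split_ifs with h1 h2 h2 <;> simp_all <;> omega

lemma Bform_diag (x : ℕ) : Bform x 0 x = 1 := by
  rcases Nat.eq_zero_or_pos x with h | h
  · subst h
    rw [Bform, if_pos rfl, Aform_zero]
    norm_num
  · rw [Bform, if_neg (by omega), Aform_zero, Aform_zero]
    rw [if_neg (by omega), if_pos (by omega)]
    norm_num

lemma Fform_eq_Bform (x y z v : ℕ) : Fform x y z v = Bform x y z := by
  rw [Fform]
  split_ifs with h
  · obtain ⟨h0, hxz, -⟩ := h
    subst h0
    subst hxz
    exact (Bform_diag x).symm
  · rfl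

lemma sum_Bform (x y e : ℕ) : ∑ z ∈ range (e+1), Bform x y z = Aform x y e := by
  induction e with
  | zero =>
    rw [Finset.sum_range_one, Bform, if_pos rfl]
    ring
  | succ e ih =>
    rw [Finset.sum_range_succ, ih, Bform, if_neg (by omega)]
    simp only [Nat.add_sub_cancel]
    ring

lemma inner_sum (x e : ℕ) :
    ((#(univ.filter (ZR x (e+1))) : ℕ) : ℤ) =
      ∑ y ∈ range (x + 1), ∑ z ∈ range (e + 1), Bform x y z := by
  rw [card_ZR]
  push_cast
  apply Finset.sum_congr rfl
  intro y hy
  rw [Finset.mem_range] at hy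
  rw [sum_Bform, Aform_eq_card_BCs x y e (by omega), SCs_eq_BCs y x e (by omega)]

/-! ### the structural bijection -/

def phi (v u' : ℕ) (s : Fin v) (t : Fin (u' - 2) → ZMod 2) (p : Fin v) : ZMod 2 :=
  if h : v - u' < (p.val + (v - s.val)) % v ∧ (p.val + (v - s.val)) % v < v - 1 then
    t ⟨(p.val + (v - s.val)) % v - (v - u') - 1, by
      have := Nat.mod_lt (p.val + (v - s.val)) s.pos; omega⟩
  else if (p.val + (v - s.val)) % v < v - u' then 0 else 1

def Qb (v u' : ℕ) (w : Fin v → ZMod 2) (s : Fin v) : Prop :=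
  (∀ j, j < v - u' → w (cycIdx s j) = 0) ∧
    w (cycIdx s (v - 1)) = 1 ∧
    w (cycIdx s (v - u')) = 1 ∧
    (∀ a L, a + L ≤ u' → (∀ j, j < L → w (cycIdx s (v - u' + a + j)) = 0) → L < v - u')

lemma phi_eval (v u' : ℕ) (s : Fin v) (t : Fin (u' - 2) → ZMod 2) (r : ℕ) (hr : r < v) :
    phi v u' s t (cycIdx s r) =
      if h : v - u' < r ∧ r < v - 1 then t ⟨r - (v - u') - 1, by omega⟩
      else if r < v - u' then 0 else 1 := by
  have hs : ((cycIdx s r).val + (v - s.val)) % v = r := relc_cycIdx_of_lt s r hr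
  unfold phi
  simp only [hs]

lemma Qb_phi (v u' : ℕ) (hu2 : 2 ≤ u') (huv : u' + 1 ≤ v) (s : Fin v)
    (t : Fin (u' - 2) → ZMod 2) (ht : ZR (u' - 2) (v - u') t) :
    Qb v u' (phi v u' s t) s := by
  refine ⟨?_, ?_, ?_, ?_⟩
  · intro j hj
    rw [phi_eval v u' s t j (by omega), dif_neg (by omega), if_pos hj]
  · rw [phi_eval v u' s t (v-1) (by omega), dif_neg (by omega), if_neg (by omega)]
  · rw [phi_eval v u' s t (v-u') (by omega), dif_neg (by omega), if_neg (by omega)]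
  · intro a L haL hz
    by_cases hL0 : L = 0
    · omega
    have ha1 : 1 ≤ a := by
      by_contra hc
      push_neg at hc
      have h0 := hz 0 (by omega)
      rw [show v - u' + a + 0 = v - u' by omega] at h0
      rw [phi_eval v u' s t (v - u') (by omega), dif_neg (by omega), if_neg (by omega)] at h0
      exact one_ne_zero h0
    have hend : a + L ≤ u' - 1 := by
      by_contra hc
      push_neg at hc
      have h0 := hz (L-1) (by omega)
      rw [show v - u' + a + (L-1) = v - 1 by omega] at h0
      rw [phi_eval v u' s t (v-1) (by omega), dif_neg (by omega), if_neg (by omega)] at h0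
      exact one_ne_zero h0
    apply ht (a - 1) L (by omega)
    intro j hj
    have h0 := hz j hj
    rw [phi_eval v u' s t (v - u' + a + j) (by omega), dif_pos (by omega)] at h0
    have hidx : (⟨a - 1 + j, by omega⟩ : Fin (u' - 2))
        = ⟨v - u' + a + j - (v - u') - 1, by omega⟩ := by
      apply Fin.ext
      show a - 1 + j = v - u' + a + j - (v - u') - 1
      omega
    rw [hidx]
    exact h0

lemma Qb_unique (v u₁ u₂ : ℕ) (h1 : 2 ≤ u₁) (h1v : u₁ + 1 ≤ v) (h2 : 2 ≤ u₂)
    (h2v : u₂ + 1 ≤ v) (w : Fin v → ZMod 2) (s₁ s₂ : Fin v)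
    (q1 : Qb v u₁ w s₁) (q2 : Qb v u₂ w s₂) : u₁ = u₂ ∧ s₁ = s₂ := by
  have aux : ∀ uA uB : ℕ, 2 ≤ uA → uA + 1 ≤ v → 2 ≤ uB → uB + 1 ≤ v →
      ∀ sA sB, Qb v uA w sA → Qb v uB w sB → v - uB ≤ v - uA → sA = sB := by
    intro uA uB h2A hvA h2B hvB sA sB qA qB hg
    have hrv : relc sB sA < v := relc_lt sB sA
    have hcyc : cycIdx sB (relc sB sA) = sA := cycIdx_relc sB sA
    set r := relc sB sA with hrdef
    have hA0 : ∀ j, j < v - uA → w (cycIdx sB (r + j)) = 0 := by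
      intro j hj
      rw [← cycIdx_add, hcyc]
      exact qA.1 j hj
    have hA1 : w (cycIdx sB (r + (v-1))) = 1 := by
      rw [← cycIdx_add, hcyc]
      exact qA.2.1
    rcases Nat.eq_zero_or_pos r with hr0 | hrpos
    · rw [hr0, cycIdx_zero] at hcyc
      exact hcyc.symm
    · exfalso
      by_cases hcase : r < v - uB
      · have h1' : w (cycIdx sB (r - 1 + v)) = 1 := by
          rw [show r - 1 + v = r + (v - 1) by omega]
          exact hA1
        rw [cycIdx_add_period] at h1'
        rw [qB.1 (r-1) (by omega)] at h1'
        exact zero_ne_one h1'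
      · push_neg at hcase
        have hrend : r + (v - uA) ≤ v - 1 := by
          by_contra hc
          push_neg at hc
          have h0 := hA0 (v - 1 - r) (by omega)
          rw [show r + (v - 1 - r) = v - 1 by omega] at h0
          rw [qB.2.1] at h0
          exact one_ne_zero h0
        have hfin : v - uA < v - uB := by
          apply qB.2.2.2 (r - (v - uB)) (v - uA) (by omega)
          intro j hj
          rw [show v - uB + (r - (v - uB)) + j = r + j by omega]
          exact hA0 j hj
        omega
  have hseq : s₁ = s₂ := by
    rcases le_total (v - u₂) (v - u₁) with hg | hg
    · exact aux u₁ u₂ h1 h1v h2 h2v s₁ s₂ q1 q2 hg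
    · exact (aux u₂ u₁ h2 h2v h1 h1v s₂ s₁ q2 q1 hg).symm
  subst hseq
  refine ⟨?_, rfl⟩
  by_contra hne
  rcases Nat.lt_or_ge u₁ u₂ with hlt | hge
  · -- v - u₂ < v - u₁ : position v - u₂ is zero for q1, one for q2
    have h0 := q1.1 (v - u₂) (by omega)
    rw [q2.2.2.1] at h0
    exact one_ne_zero h0
  · have hlt : u₂ < u₁ := by omega
    have h0 := q2.1 (v - u₁) (by omega)
    rw [q1.2.2.1] at h0
    exact one_ne_zero h0

lemma phi_readback (v u' : ℕ) (hu2 : 2 ≤ u') (huv : u' + 1 ≤ v) (s : Fin v)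
    (t : Fin (u' - 2) → ZMod 2) (k : Fin (u' - 2)) :
    phi v u' s t (cycIdx s (v - u' + 1 + k.val)) = t k := by
  have hk := k.isLt
  rw [phi_eval v u' s t (v - u' + 1 + k.val) (by omega), dif_pos (by omega)]
  have hidx : (⟨v - u' + 1 + k.val - (v - u') - 1, by omega⟩ : Fin (u' - 2)) = k := by
    apply Fin.ext
    show v - u' + 1 + k.val - (v - u') - 1 = k.val
    omega
  rw [hidx]

lemma phi_surj (v u' : ℕ) (hu2 : 2 ≤ u') (huv : u' + 1 ≤ v) (w : Fin v → ZMod 2)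
    (s : Fin v) (hq : Qb v u' w s) :
    ∃ t : Fin (u' - 2) → ZMod 2, ZR (u' - 2) (v - u') t ∧ phi v u' s t = w := by
  obtain ⟨hq1, hq2, hq3, hq4⟩ := hq
  refine ⟨fun k => w (cycIdx s (v - u' + 1 + k.val)), ?_, ?_⟩
  · intro a L haL hz
    apply hq4 (a+1) L (by omega)
    intro j hj
    have h0 := hz j hj
    rw [show v - u' + (a+1) + j = v - u' + 1 + (a + j) by omega]
    exact h0
  · funext p
    have hrv : relc s p < v := relc_lt s p
    have hp : cycIdx s (relc s p) = p := cycIdx_relc s p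
    rw [← hp]
    rw [phi_eval v u' s _ (relc s p) hrv]
    by_cases h1 : v - u' < relc s p ∧ relc s p < v - 1
    · rw [dif_pos h1]
      show w (cycIdx s (v - u' + 1 + (relc s p - (v - u') - 1))) = w (cycIdx s (relc s p))
      rw [show v - u' + 1 + (relc s p - (v - u') - 1) = relc s p by omega]
    · rw [dif_neg h1]
      push_neg at h1
      by_cases h2 : relc s p < v - u'
      · rw [if_pos h2, hq1 (relc s p) h2]
      · rw [if_neg h2]
        push_neg at h2
        have : relc s p = v - u' ∨ relc s p = v - 1 := by omega
        rcases this with h | h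
        · rw [h]
          exact hq3.symm
        · rw [h]
          exact hq2.symm

lemma main_count (v u : ℕ) (hu : 2 ≤ u) (huv : u + 1 ≤ v) :
    #(univ.filter fun w : Fin v → ZMod 2 =>
        ∃ u', 2 ≤ u' ∧ u' ≤ u ∧ IsEndAroundBurst v u' w) =
      ∑ u' ∈ Finset.Icc 2 u, v * #(univ.filter (ZR (u' - 2) (v - u'))) := by
  have hterm : ∀ u' ∈ Finset.Icc 2 u, v * #(univ.filter (ZR (u' - 2) (v - u')))
      = #((univ : Finset (Fin v)) ×ˢ (univ.filter (ZR (u' - 2) (v - u')))) := by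
    intro u' _
    rw [Finset.card_product, Finset.card_univ, Fintype.card_fin]
  rw [Finset.sum_congr rfl hterm, ← Finset.card_sigma]
  refine (Finset.card_bij
    (fun (a : Σ u' : ℕ, Fin v × (Fin (u' - 2) → ZMod 2))
      (_ : a ∈ (Finset.Icc 2 u).sigma
        (fun u' => (univ : Finset (Fin v)) ×ˢ (univ.filter (ZR (u' - 2) (v - u')))))
      => phi v a.1 a.2.1 a.2.2) ?_ ?_ ?_).symm
  · rintro ⟨u', s, t⟩ ha
    rw [Finset.mem_sigma, Finset.mem_Icc, Finset.mem_product, Finset.mem_filter] at ha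
    obtain ⟨⟨h2u, huu⟩, -, -, hZ⟩ := ha
    have h2u : 2 ≤ u' := h2u
    have huu : u' ≤ u := huu
    have hZ : ZR (u' - 2) (v - u') t := hZ
    rw [Finset.mem_filter]
    refine ⟨Finset.mem_univ _, u', h2u, huu, h2u, by omega, s, Qb_phi v u' h2u (by omega) s t hZ⟩
  · rintro ⟨u₁, s₁, t₁⟩ ha ⟨u₂, s₂, t₂⟩ hb h
    rw [Finset.mem_sigma, Finset.mem_Icc, Finset.mem_product, Finset.mem_filter] at ha hb
    obtain ⟨⟨h2a, hua⟩, -, -, hZa⟩ := ha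
    obtain ⟨⟨h2b, hub⟩, -, -, hZb⟩ := hb
    have h2a : 2 ≤ u₁ := h2a
    have hua : u₁ ≤ u := hua
    have hZa : ZR (u₁ - 2) (v - u₁) t₁ := hZa
    have h2b : 2 ≤ u₂ := h2b
    have hub : u₂ ≤ u := hub
    have hZb : ZR (u₂ - 2) (v - u₂) t₂ := hZb
    have h' : phi v u₁ s₁ t₁ = phi v u₂ s₂ t₂ := h
    have hq1 := Qb_phi v u₁ h2a (by omega) s₁ t₁ hZa
    have hq2 := Qb_phi v u₂ h2b (by omega) s₂ t₂ hZb
    rw [h'] at hq1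
    obtain ⟨hueq, hseq⟩ := Qb_unique v u₁ u₂ h2a (by omega) h2b (by omega) _ s₁ s₂ hq1 hq2
    subst hueq
    subst hseq
    have hteq : t₁ = t₂ := by
      funext k
      rw [← phi_readback v u₁ h2a (by omega) s₁ t₁ k, h',
        phi_readback v u₁ h2a (by omega) s₁ t₂ k]
    rw [hteq]
  · intro w hw
    rw [Finset.mem_filter] at hw
    obtain ⟨-, u', h2u, huu, -, hv', s, hQ⟩ := hw
    obtain ⟨t, hZ, hphi⟩ := phi_surj v u' h2u hv' w s hQ
    refine ⟨⟨u', s, t⟩, ?_, hphi⟩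
    rw [Finset.mem_sigma, Finset.mem_Icc, Finset.mem_product, Finset.mem_filter]
    exact ⟨⟨h2u, huu⟩, Finset.mem_univ _, Finset.mem_univ _, hZ⟩

lemma final (v u : ℕ) (hu : 2 ≤ u) (huv : u ≤ v - 1) :
    (Nat.card {w : Fin v → ZMod 2 //
        ∃ u', 2 ≤ u' ∧ u' ≤ u ∧ IsEndAroundBurst v u' w} : ℤ) =
      (v : ℤ) * ∑ x ∈ Finset.range (u - 1), ∑ y ∈ Finset.range (x + 1),
        ∑ z ∈ Finset.range (v - x - 2), Fform x y z v := by
  have huv' : u + 1 ≤ v := by omega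
  rw [Nat.card_eq_fintype_card, Fintype.card_subtype]
  rw [main_count v u hu huv']
  rw [← Finset.Ico_add_one_right_eq_Icc, Finset.sum_Ico_eq_sum_range]
  have hrange : u + 1 - 2 = u - 1 := by omega
  rw [hrange]
  push_cast
  rw [Finset.mul_sum]
  apply Finset.sum_congr rfl
  intro x hx
  rw [Finset.mem_range] at hx
  have hx3 : x + 3 ≤ v := by omega
  have h2x : 2 + x - 2 = x := by omega
  have hve : v - (2 + x) = (v - x - 3) + 1 := by omega
  rw [h2x, hve, inner_sum x (v - x - 3)]
  congr 1
  apply Finset.sum_congr rfl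
  intro y _
  have hz : v - x - 2 = (v - x - 3) + 1 := by omega
  rw [hz]
  apply Finset.sum_congr rfl
  intro z _
  exact (Fform_eq_Bform x y z v).symm

end

end EAB

/-- For `2 ≤ u ≤ v - 1`, the number of binary words `w : Fin v → ZMod 2` that are
end-around phased-burst errors of burst length `u'` with error-free gap `v - u'`
for some `2 ≤ u' ≤ u` equals `v · Σ_{x=0}^{u-2} Σ_{y=0}^{x} Σ_{z=0}^{v-x-3} F(x,y,z,v)`. -/
theorem stmt3 (v u : ℕ) (hu : 2 ≤ u) (huv : u ≤ v - 1) :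
    (Nat.card {w : Fin v → ZMod 2 //
        ∃ u', 2 ≤ u' ∧ u' ≤ u ∧ IsEndAroundBurst v u' w} : ℤ) =
      (v : ℤ) * ∑ x ∈ Finset.range (u - 1), ∑ y ∈ Finset.range (x + 1),
        ∑ z ∈ Finset.range (v - x - 2), Fform x y z v := by
  exact EAB.final v u hu huv
end

section
/- Let t, v, M, E_sym be natural numbers with n = t·v, 1 ≤ M ≤ t and 1 ≤ E_sym ≤ v. Let C be a k-dimensional linear subspace of (ZMod 2)^n (with coordinates indexed by pairs (subblock index in Fin t, position in Fin v)). Let E be the set of vectors e ∈ (ZMod 2)^n such that at most M of the t subblocks of e are nonzero and the restriction of e to each subblock has Hamming weight at most E_sym. If distinct elements of E lie in distinct cosets of C (i.e., for all e₁ ≠ e₂ in E, e₁ − e₂ ∉ C), then 2^{n−k} ≥ Σ_{j=1}^{M} C(t, j) · [ Σ_{l=1}^{E_sym} C(v, l) ]^j + 1. -/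
/-- Error patterns with at most `M` nonzero subblocks, each subblock of
Hamming weight at most `Esym`. -/
def MPBCSymErrors (t v M Esym : ℕ) : Set (Fin t × Fin v → ZMod 2) :=
  {e | Nat.card {i : Fin t // (fun p => e (i, p)) ≠ 0} ≤ M ∧
       ∀ i : Fin t, wt (fun p => e (i, p)) ≤ Esym}

open Finset

lemma wt_eq_zero_iff_s5 {α : Type*} [Fintype α] (f : α → ZMod 2) : wt f = 0 ↔ f = 0 := by
  rw [wt, Finset.card_eq_zero, Finset.filter_eq_empty_iff]
  constructor
  · intro h; funext i
    rcases zmod2_cases (f i) with h0 | h1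
    · exact h0
    · exact absurd h1 (h (Finset.mem_univ i))
  · intro h i _; rw [h]; simp only [Pi.zero_apply]; decide

lemma wt_zero {α : Type*} [Fintype α] : wt (0 : α → ZMod 2) = 0 :=
  (wt_eq_zero_iff_s5 0).2 rfl

open Classical in
lemma card_wt_eq (v l : ℕ) :
    (Finset.univ.filter fun w : Fin v → ZMod 2 => wt w = l).card = v.choose l := by
  classical
  conv_rhs => rw [← Fintype.card_fin v, ← card_univ,
    ← Finset.card_powersetCard l (Finset.univ : Finset (Fin v))]
  refine Finset.card_bij' (fun w _ => Finset.univ.filter fun i => w i = 1)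
    (fun S _ => fun i => if i ∈ S then 1 else 0) ?_ ?_ ?_ ?_
  · intro w hw
    rw [Finset.mem_powersetCard_univ]
    exact (Finset.mem_filter.1 hw).2
  · intro S hS
    rw [Finset.mem_powersetCard_univ] at hS
    rw [Finset.mem_filter]
    refine ⟨Finset.mem_univ _, ?_⟩
    have : (Finset.univ.filter fun i => (if i ∈ S then (1 : ZMod 2) else 0) = 1) = S := by
      ext i
      by_cases h : i ∈ S <;> simp [h]
    rw [wt]
    simp only [this, hS]
  · intro w hw
    funext i
    by_cases h : w i = 1 <;> simp [h]
    rcases zmod2_cases (w i) with h0 | h1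
    · exact h0.symm
    · exact absurd h1 h
  · intro S hS
    ext i
    by_cases h : i ∈ S <;> simp [h]

open Classical in
lemma card_W (v Esym : ℕ) :
    (Finset.univ.filter fun w : Fin v → ZMod 2 => w ≠ 0 ∧ wt w ≤ Esym).card
      = ∑ l ∈ Finset.Icc 1 Esym, v.choose l := by
  classical
  have hset : (Finset.univ.filter fun w : Fin v → ZMod 2 => w ≠ 0 ∧ wt w ≤ Esym)
      = (Finset.Icc 1 Esym).biUnion (fun l => Finset.univ.filter fun w => wt w = l) := by
    ext w
    simp only [Finset.mem_filter, Finset.mem_biUnion, Finset.mem_Icc, Finset.mem_univ, true_and]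
    constructor
    · rintro ⟨hne, hle⟩
      exact ⟨wt w, ⟨Nat.one_le_iff_ne_zero.2 fun h => hne ((wt_eq_zero_iff_s5 w).1 h), hle⟩, rfl⟩
    · rintro ⟨l, ⟨h1, h2⟩, rfl⟩
      refine ⟨fun h => ?_, h2⟩
      rw [(wt_eq_zero_iff_s5 w).2 h] at h1; omega
  rw [hset, Finset.card_biUnion]
  · exact Finset.sum_congr rfl fun l _ => card_wt_eq v l
  · intro a _ b _ hab
    simp only [Finset.disjoint_left, Finset.mem_filter]
    rintro w ⟨_, rfl⟩ ⟨_, h⟩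
    exact hab h


open Classical in
lemma card_E (t v M Esym : ℕ) :
    (Finset.univ.filter fun e : Fin t × Fin v → ZMod 2 => e ∈ MPBCSymErrors t v M Esym).card
      = ∑ j ∈ Finset.range (M + 1),
          t.choose j * (∑ l ∈ Finset.Icc 1 Esym, v.choose l) ^ j := by
  classical
  set W : ℕ := ∑ l ∈ Finset.Icc 1 Esym, v.choose l with hW
  set Wfin : Finset (Fin v → ZMod 2) :=
    Finset.univ.filter fun w => w ≠ 0 ∧ wt w ≤ Esym with hWfin
  have hWcard : Wfin.card = W := card_W v Esym
  set supp : (Fin t × Fin v → ZMod 2) → Finset (Fin t) :=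
    fun e => Finset.univ.filter fun i => (fun p => e (i, p)) ≠ 0 with hsupp
  have hmem : ∀ e : Fin t × Fin v → ZMod 2, e ∈ MPBCSymErrors t v M Esym ↔
      (supp e).card ≤ M ∧ ∀ i, wt (fun p => e (i, p)) ≤ Esym := by
    intro e
    unfold MPBCSymErrors
    rw [Set.mem_setOf_eq, Nat.card_eq_fintype_card, Fintype.card_subtype]
  set Efin := Finset.univ.filter
    fun e : Fin t × Fin v → ZMod 2 => e ∈ MPBCSymErrors t v M Esym with hEfin
  set T : Finset (Finset (Fin t)) :=
    (Finset.range (M + 1)).biUnion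
      (fun j => Finset.powersetCard j (Finset.univ : Finset (Fin t))) with hT
  have hmaps : ∀ e ∈ Efin, supp e ∈ T := by
    intro e he
    rw [hEfin, Finset.mem_filter] at he
    rw [hT, Finset.mem_biUnion]
    exact ⟨(supp e).card, Finset.mem_range.2 (Nat.lt_succ_of_le ((hmem e).1 he.2).1),
      Finset.mem_powersetCard_univ.2 rfl⟩
  rw [Finset.card_eq_sum_card_fiberwise hmaps]
  -- fiber count
  have hfiber : ∀ S : Finset (Fin t), S.card ≤ M →
      (Efin.filter fun e => supp e = S).card = W ^ S.card := by
    intro S hSM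
    rw [← hWcard, ← Finset.prod_const, ← Finset.card_pi]
    refine Finset.card_bij' (fun e _ => fun i _ => fun p => e (i, p))
      (fun g _ => fun q => if h : q.1 ∈ S then g q.1 h q.2 else 0) ?_ ?_ ?_ ?_
    · intro e he
      rw [Finset.mem_filter] at he
      obtain ⟨heE, heS⟩ := he
      rw [hEfin, Finset.mem_filter, hmem] at heE
      rw [Finset.mem_pi]
      intro i hi
      rw [hWfin, Finset.mem_filter]
      refine ⟨Finset.mem_univ _, ?_, heE.2.2 i⟩
      rw [← heS, hsupp] at hi
      exact (Finset.mem_filter.1 hi).2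
    · intro g hg
      rw [Finset.mem_pi] at hg
      have hsupp_eq : supp (fun q => if h : q.1 ∈ S then g q.1 h q.2 else 0) = S := by
        ext i
        rw [hsupp, Finset.mem_filter]
        simp only [Finset.mem_univ, true_and]
        constructor
        · intro hne
          by_contra hiS
          apply hne
          funext p
          exact dif_neg hiS
        · intro hiS hzero
          have := hg i hiS
          rw [hWfin, Finset.mem_filter] at this
          apply this.2.1
          funext p
          have := congrFun hzero p
          simpa only [dif_pos hiS] using this
      rw [Finset.mem_filter]
      refine ⟨?_, hsupp_eq⟩
      rw [hEfin, Finset.mem_filter, hmem]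
      refine ⟨Finset.mem_univ _, ?_, ?_⟩
      · rw [hsupp_eq]; exact hSM
      · intro i
        by_cases hiS : i ∈ S
        · have := hg i hiS
          rw [hWfin, Finset.mem_filter] at this
          have heq : (fun p => if h : i ∈ S then g i h p else 0) = g i hiS := by
            funext p; exact dif_pos hiS
          rw [heq]
          exact this.2.2
        · have heq : (fun p => if h : i ∈ S then g i h p else 0) = (0 : Fin v → ZMod 2) := by
            funext p; exact dif_neg hiS
          rw [heq, wt_zero]
          omega
    · intro e he
      rw [Finset.mem_filter] at he
      funext q
      obtain ⟨a, b⟩ := q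
      by_cases h : a ∈ S
      · simp only [dif_pos h]
      · simp only [dif_neg h]
        rw [← he.2, hsupp] at h
        simp only [Finset.mem_filter, Finset.mem_univ, true_and, not_not] at h
        exact (congrFun h b).symm
    · intro g hg
      funext i hi p
      simp only [dif_pos hi]
  -- sum over T
  rw [hT, Finset.sum_biUnion]
  · refine Finset.sum_congr rfl fun j hj => ?_
    rw [Finset.mem_range] at hj
    have : ∀ S ∈ Finset.powersetCard j (Finset.univ : Finset (Fin t)),
        (Efin.filter fun e => supp e = S).card = W ^ j := by
      intro S hS
      rw [Finset.mem_powersetCard_univ] at hS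
      rw [hfiber S (hS ▸ Nat.lt_succ_iff.1 hj), hS]
    rw [Finset.sum_congr rfl this, Finset.sum_const, Finset.card_powersetCard,
      Finset.card_univ, Fintype.card_fin, smul_eq_mul]
  · intro a _ b _ hab
    simp only [Finset.disjoint_left]
    intro S hSa hSb
    rw [Finset.mem_powersetCard_univ] at hSa hSb
    exact hab (hSa ▸ hSb ▸ rfl)

/-- The MPBC bound without a gap constraint: if the `k`-dimensional code
`C ≤ (ZMod 2)^(t·v)` corrects all error patterns with at most `M` nonzero subblocks
each of Hamming weight at most `Esym`, then
`2^(n-k) ≥ Σ_{j=1}^{M} C(t,j) · (Σ_{l=1}^{Esym} C(v,l))^j + 1`. -/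
theorem stmt5 (t v M Esym k : ℕ) (hM1 : 1 ≤ M) (hMt : M ≤ t)
    (hE1 : 1 ≤ Esym) (hEv : Esym ≤ v)
    (C : Submodule (ZMod 2) (Fin t × Fin v → ZMod 2))
    (hk : Module.finrank (ZMod 2) C = k)
    (hcorr : ∀ e₁ ∈ MPBCSymErrors t v M Esym, ∀ e₂ ∈ MPBCSymErrors t v M Esym,
      e₁ ≠ e₂ → e₁ - e₂ ∉ C) :
    (∑ j ∈ Finset.Icc 1 M, t.choose j * (∑ l ∈ Finset.Icc 1 Esym, v.choose l) ^ j) + 1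
      ≤ 2 ^ (t * v - k) := by
  classical
  set W : ℕ := ∑ l ∈ Finset.Icc 1 Esym, v.choose l with hW
  set Efin := Finset.univ.filter
    fun e : Fin t × Fin v → ZMod 2 => e ∈ MPBCSymErrors t v M Esym with hEfin
  have hcard : Efin.card = (∑ j ∈ Finset.Icc 1 M, t.choose j * W ^ j) + 1 := by
    rw [hEfin, card_E, Finset.sum_range_succ']
    congr 1
    · rw [show Finset.Icc 1 M = Finset.Ico 1 (M + 1) from (Finset.Ico_add_one_right_eq_Icc 1 M).symm,
        Finset.sum_Ico_eq_sum_range]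
      simp [add_comm, hW]
    · simp
  have hfinQ : Finite ((Fin t × Fin v → ZMod 2) ⧸ C) := Quotient.finite _
  haveI : Fintype ((Fin t × Fin v → ZMod 2) ⧸ C) := Fintype.ofFinite _
  have hcardQ : Fintype.card ((Fin t × Fin v → ZMod 2) ⧸ C) = 2 ^ (t * v - k) := by
    have h1 : Fintype.card ((Fin t × Fin v → ZMod 2) ⧸ C)
        = Fintype.card (ZMod 2) ^ Module.finrank (ZMod 2) ((Fin t × Fin v → ZMod 2) ⧸ C) :=
      Module.card_eq_pow_finrank
    have h2 := Submodule.finrank_quotient_add_finrank C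
    have h3 : Module.finrank (ZMod 2) (Fin t × Fin v → ZMod 2) = t * v := by
      rw [Module.finrank_pi]
      simp [Fintype.card_prod]
    rw [h1, ZMod.card]
    congr 1
    rw [hk] at h2
    rw [h3] at h2
    omega
  have hinj : Efin.card ≤ Fintype.card ((Fin t × Fin v → ZMod 2) ⧸ C) := by
    rw [← Finset.card_univ]
    refine Finset.card_le_card_of_injOn (fun e => Submodule.Quotient.mk e)
      (fun _ _ => Finset.mem_univ _) ?_
    intro e₁ h1 e₂ h2 heq
    by_contra hne
    rw [Finset.mem_coe, hEfin, Finset.mem_filter] at h1 h2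
    exact hcorr e₁ h1.2 e₂ h2.2 hne ((Submodule.Quotient.eq C).1 heq)
  rw [hcard] at hinj
  rw [hcardQ] at hinj
  exact hinj
end

section
/- Let t, v, M be natural numbers with n = t·v and 1 ≤ M ≤ t. Let C be a k-dimensional linear subspace of (ZMod 2)^n (with coordinates indexed by pairs (subblock index in Fin t, position in Fin v)). Let E be the set of vectors e ∈ (ZMod 2)^n such that at most M of the t subblocks of e are nonzero (with no restriction on the error pattern within a nonzero subblock). If distinct elements of E lie in distinct cosets of C (i.e., for all e₁ ≠ e₂ in E, e₁ − e₂ ∉ C), then 2^{n−k} ≥ Σ_{j=1}^{M} C(t, j) · (2^v − 1)^j + 1. -/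
/-- Error patterns with at most `M` nonzero subblocks (no restriction on the
error pattern within a nonzero subblock). -/
def MPBCFullErrors (t v M : ℕ) : Set (Fin t × Fin v → ZMod 2) :=
  {e | Nat.card {i : Fin t // (fun p => e (i, p)) ≠ 0} ≤ M}

/-- Functions with exact support `S`, valued in `W`, correspond to families of
nonzero values on `S`. -/
def suppEquiv {t : ℕ} {W : Type*} [Zero W] (S : Finset (Fin t)) :
    {e : Fin t → W // ∀ i, e i ≠ 0 ↔ i ∈ S} ≃ ((i : S) → {w : W // w ≠ 0}) where
  toFun e i := ⟨e.1 i, (e.2 i).mpr i.2⟩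
  invFun g := ⟨fun i => if h : i ∈ S then (g ⟨i, h⟩).1 else 0, fun i => by
    by_cases h : i ∈ S
    · simp only [dif_pos h, h, iff_true]
      exact (g ⟨i, h⟩).2
    · simp [h]⟩
  left_inv e := Subtype.ext (funext fun i => by
    by_cases h : i ∈ S
    · simp [h]
    · simp only [dif_neg h]
      exact (not_not.mp fun hne => h ((e.2 i).mp hne)).symm)
  right_inv g := funext fun i => Subtype.ext (by simp [i.2])

lemma count_exact_supp {t v : ℕ} (S : Finset (Fin t)) :
    (Finset.univ.filter (fun e : Fin t → Fin v → ZMod 2 =>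
      (Finset.univ.filter fun i => e i ≠ 0) = S)).card = (2 ^ v - 1) ^ S.card := by
  rw [← Fintype.card_subtype]
  have e1 : {e : Fin t → Fin v → ZMod 2 //
      (Finset.univ.filter fun i => e i ≠ 0) = S} ≃
      {e : Fin t → Fin v → ZMod 2 // ∀ i, e i ≠ 0 ↔ i ∈ S} :=
    Equiv.subtypeEquivRight (fun e => by
      constructor
      · intro h i; rw [← h]; simp
      · intro h; ext i; simp [h i])
  rw [Fintype.card_congr (e1.trans (suppEquiv S))]
  have hW : Fintype.card {w : Fin v → ZMod 2 // w ≠ 0} = 2 ^ v - 1 := by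
    have := Fintype.card_subtype_compl (fun w : Fin v → ZMod 2 => w = 0)
    rw [this, Fintype.card_subtype_eq]
    simp [Fintype.card_fun]
  simp [Fintype.card_pi, hW, Finset.prod_const, Finset.card_attach]

lemma count_ball (t v M : ℕ) :
    (Finset.univ.filter (fun e : Fin t → Fin v → ZMod 2 =>
      (Finset.univ.filter fun i => e i ≠ 0).card ≤ M)).card
    = ∑ j ∈ Finset.range (M + 1), t.choose j * (2 ^ v - 1) ^ j := by
  classical
  rw [Finset.card_eq_sum_card_fiberwise
    (f := fun e : Fin t → Fin v → ZMod 2 => Finset.univ.filter fun i => e i ≠ 0)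
    (t := Finset.univ.powerset.filter fun S => S.card ≤ M)
    (fun e he => by
      simp only [Finset.mem_coe, Finset.mem_filter, Finset.mem_powerset] at *
      exact ⟨Finset.subset_univ _, he.2⟩)]
  have hfib : ∀ S ∈ Finset.univ.powerset.filter fun S : Finset (Fin t) => S.card ≤ M,
      ((Finset.univ.filter (fun e : Fin t → Fin v → ZMod 2 =>
        (Finset.univ.filter fun i => e i ≠ 0).card ≤ M)).filter
        (fun e => (Finset.univ.filter fun i => e i ≠ 0) = S)).card
      = (2 ^ v - 1) ^ S.card := by
    intro S hS
    simp only [Finset.mem_filter, Finset.mem_powerset] at hS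
    rw [Finset.filter_filter, ← count_exact_supp (v := v) S]
    congr 1
    apply Finset.filter_congr
    intro e _
    constructor
    · exact fun h => h.2
    · exact fun h => ⟨by rw [h]; exact hS.2, h⟩
  rw [Finset.sum_congr rfl hfib]
  have hidx : (Finset.univ.powerset.filter fun S : Finset (Fin t) => S.card ≤ M)
      = (Finset.range (M + 1)).biUnion (fun j => Finset.powersetCard j Finset.univ) := by
    ext S
    simp only [Finset.mem_filter, Finset.mem_powerset, Finset.mem_biUnion,
      Finset.mem_range, Finset.mem_powersetCard, Nat.lt_succ_iff]
    constructor
    · exact fun h => ⟨S.card, h.2, h.1, rfl⟩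
    · rintro ⟨j, hj, -, rfl⟩; exact ⟨Finset.subset_univ _, hj⟩
  rw [hidx, Finset.sum_biUnion (by
    intro a _ b _ hab
    apply Finset.disjoint_left.mpr
    intro S hSa hSb
    rw [Finset.mem_powersetCard] at hSa hSb
    exact hab (hSa.2 ▸ hSb.2))]
  apply Finset.sum_congr rfl
  intro j _
  calc ∑ S ∈ Finset.powersetCard j (Finset.univ : Finset (Fin t)), (2 ^ v - 1) ^ S.card
      = ∑ S ∈ Finset.powersetCard j (Finset.univ : Finset (Fin t)), (2 ^ v - 1) ^ j := by
        apply Finset.sum_congr rfl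
        intro S hS
        rw [(Finset.mem_powersetCard.mp hS).2]
    _ = t.choose j * (2 ^ v - 1) ^ j := by
        rw [Finset.sum_const, Finset.card_powersetCard, Finset.card_univ,
          Fintype.card_fin, smul_eq_mul]

/-- If the `k`-dimensional code `C ≤ (ZMod 2)^(t·v)` corrects all error patterns with
at most `M` nonzero subblocks, then `2^(n-k) ≥ Σ_{j=1}^{M} C(t,j) · (2^v - 1)^j + 1`. -/
theorem stmt6 (t v M k : ℕ) (hM1 : 1 ≤ M) (hMt : M ≤ t)
    (C : Submodule (ZMod 2) (Fin t × Fin v → ZMod 2))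
    (hk : Module.finrank (ZMod 2) C = k)
    (hcorr : ∀ e₁ ∈ MPBCFullErrors t v M, ∀ e₂ ∈ MPBCFullErrors t v M,
      e₁ ≠ e₂ → e₁ - e₂ ∉ C) :
    (∑ j ∈ Finset.Icc 1 M, t.choose j * (2 ^ v - 1) ^ j) + 1 ≤ 2 ^ (t * v - k) := by
  classical
  let Q := (Fin t × Fin v → ZMod 2) ⧸ C
  -- cardinality of the quotient
  have hfr : Module.finrank (ZMod 2) Q = t * v - k := by
    have h1 : Module.finrank (ZMod 2) Q + Module.finrank (ZMod 2) C
        = Module.finrank (ZMod 2) (Fin t × Fin v → ZMod 2) :=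
      Submodule.finrank_quotient_add_finrank C
    have h2 : Module.finrank (ZMod 2) (Fin t × Fin v → ZMod 2) = t * v := by
      simp [Module.finrank_fintype_fun_eq_card]
    omega
  have hcardQ : Fintype.card Q = 2 ^ (t * v - k) := by
    rw [Module.card_eq_pow_finrank (K := ZMod 2) (V := Q), hfr, ZMod.card]
  -- E injects into the quotient
  have hinj : Function.Injective
      (fun e : MPBCFullErrors t v M => (Submodule.Quotient.mk e.1 : Q)) := by
    intro e₁ e₂ h
    by_contra hne
    exact hcorr e₁.1 e₁.2 e₂.1 e₂.2 (fun h' => hne (Subtype.ext h'))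
      ((Submodule.Quotient.eq C).mp h)
  have hle : Nat.card (MPBCFullErrors t v M) ≤ 2 ^ (t * v - k) := by
    have := Nat.card_le_card_of_injective _ hinj
    rwa [Nat.card_eq_fintype_card (α := Q), hcardQ] at this
  -- compute the cardinality of E
  have hE : Nat.card (MPBCFullErrors t v M)
      = ∑ j ∈ Finset.range (M + 1), t.choose j * (2 ^ v - 1) ^ j := by
    rw [← count_ball t v M, Nat.card_eq_fintype_card, ← Fintype.card_subtype]
    apply Fintype.card_congr
    apply (Equiv.curry (Fin t) (Fin v) (ZMod 2)).symm.symm.subtypeEquiv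
    intro e
    show Nat.card {i : Fin t // (fun p => e (i, p)) ≠ 0} ≤ M ↔ _
    rw [Nat.card_eq_fintype_card, Fintype.card_subtype]
    rfl
  -- rearrange the sum
  have hsum : ∑ j ∈ Finset.range (M + 1), t.choose j * (2 ^ v - 1) ^ j
      = (∑ j ∈ Finset.Icc 1 M, t.choose j * (2 ^ v - 1) ^ j) + 1 := by
    rw [Finset.range_eq_Ico, ← Finset.sum_Ico_consecutive _ (Nat.zero_le 1)
      (by omega : 1 ≤ M + 1)]
    rw [show Finset.Ico 1 (M + 1) = Finset.Icc 1 M from Finset.Ico_add_one_right_eq_Icc 1 M]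
    simp [add_comm]
  omega
end
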